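/- arXiv:2111.06487 — 8 statements merged into one kernel-verified Lean document; each statement's English description precedes it below -/
import Mathlib

section
/- Let E be a locally convex space, B ⊆ E a set that is not precompact, and {g_n} a sequence in the dual E' converging to 0 in the weak* topology with sup_{x∈B} |g_n(x)| > 1 + δ for every n (where δ > 0). Then there exist a sequence {x_k} in B and a subsequence {f_k} of {g_n} such that |f_k(x_i)| < δ and |f_k(x_k)| > 1 + δ for all i < k. -/
open Filter Topology Pointwise

def IsPrecompactSet {E : Type*} [AddCommGroup E] [TopologicalSpace E] (A : Set E) : Prop :=
  ∀ U ∈ 𝓝 (0 : E), ∃ F : Set E, F.Finite ∧ A ⊆ F + U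

/-- If `B` is not precompact in a locally convex space and `{g n}` is a weak* null sequence of
continuous functionals with `sup_{x ∈ B} |g n x| > 1 + δ` for all `n`, then one can extract a
sequence `{x k}` in `B` and a subsequence `{g (φ k)}` with `|g (φ k) (x i)| < δ` for `i < k`
and `|g (φ k) (x k)| > 1 + δ` for all `k`. -/
theorem stmt1 {E : Type*} [AddCommGroup E] [Module ℝ E] [TopologicalSpace E]
    [IsTopologicalAddGroup E] [ContinuousSMul ℝ E] [LocallyConvexSpace ℝ E]
    (B : Set E) (hB : ¬ IsPrecompactSet B) (δ : ℝ) (hδ : 0 < δ)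
    (g : ℕ → E →L[ℝ] ℝ)
    (hnull : ∀ x : E, Tendsto (fun n => g n x) atTop (𝓝 0))
    (hsup : ∀ n, ∃ x ∈ B, 1 + δ < |g n x|) :
    ∃ x : ℕ → E, (∀ k, x k ∈ B) ∧
      ∃ φ : ℕ → ℕ, StrictMono φ ∧
        (∀ k, 1 + δ < |g (φ k) (x k)|) ∧
        ∀ i k : ℕ, i < k → |g (φ k) (x i)| < δ := by
  classical
  haveI : Inhabited E := ⟨0⟩
  have key : ∀ (L : List E) (N : ℕ), ∃ M, N < M ∧ ∀ n ≥ M, ∀ y ∈ L, |g n y| < δ := by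
    intro L N
    have h : ∀ᶠ n in atTop, ∀ y ∈ L, |g n y| < δ := by
      induction L with
      | nil => simp
      | cons a t ih =>
          have h1 := Metric.tendsto_nhds.mp (hnull a) δ hδ
          filter_upwards [h1, ih] with n hn ht
          intro y hy
          rcases List.mem_cons.mp hy with rfl | hy
          · simpa [Real.dist_eq] using hn
          · exact ht y hy
    obtain ⟨a, ha⟩ := eventually_atTop.mp h
    refine ⟨max a (N + 1), by omega, fun n hn => ha n (le_trans (le_max_left _ _) hn)⟩
  let step : ℕ × List E → ℕ × List E := fun p =>
    ((key p.2 p.1).choose, (hsup (key p.2 p.1).choose).choose :: p.2)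
  let F : ℕ → ℕ × List E := fun k =>
    Nat.rec (0, [(hsup 0).choose]) (fun _ p => step p) k
  have hFsucc : ∀ k, F (k + 1) = step (F k) := fun k => rfl
  set x : ℕ → E := fun k => ((F k).2).headI with hx
  set φ : ℕ → ℕ := fun k => (F k).1 with hφ
  -- head of list at stage k is x k, and it's the chosen element
  have hhead : ∀ k, x k ∈ B ∧ 1 + δ < |g (φ k) (x k)| := by
    intro k
    cases k with
    | zero =>
        have hs := (hsup 0).choose_spec
        exact ⟨hs.1, hs.2⟩
    | succ m =>
        have hs := (hsup (key (F m).2 (F m).1).choose).choose_spec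
        exact ⟨hs.1, hs.2⟩
  have hmono : StrictMono φ := by
    apply strictMono_nat_of_lt_succ
    intro k
    exact (key (F k).2 (F k).1).choose_spec.1
  -- membership persists
  have hmem : ∀ k j, k ≤ j → x k ∈ (F j).2 := by
    intro k j hkj
    induction j with
    | zero =>
        interval_cases k
        exact List.mem_cons_self
    | succ m ih =>
        rcases Nat.lt_or_ge k (m + 1) with h | h
        · have : x k ∈ (F m).2 := ih (Nat.lt_succ_iff.mp h)
          rw [hFsucc]
          exact List.mem_cons_of_mem _ this
        · have hk : k = m + 1 := le_antisymm hkj h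
          subst hk
          rw [hFsucc]
          exact List.mem_cons_self
  have hsmall : ∀ i k : ℕ, i < k → |g (φ k) (x i)| < δ := by
    intro i k hik
    obtain ⟨m, rfl⟩ : ∃ m, k = m + 1 := ⟨k - 1, by omega⟩
    have hspec := (key (F m).2 (F m).1).choose_spec.2
    exact hspec _ le_rfl (x i) (hmem i m (Nat.lt_succ_iff.mp hik))
  exact ⟨x, fun k => (hhead k).1, φ, hmono, fun k => (hhead k).2, hsmall⟩
end

section
/- Let E be a locally convex space, D ⊆ E a set, {x_n} a sequence in D, and {χ_n} a weak* null sequence in E' such that |χ_m(x_n)| < 1/2 for n < m and |χ_m(x_m)| > 3/2 for all m. Then the operator T : E → (𝕂^ω with product topology), T(x) = (χ_n(x))_{n∈ω}, is continuous, takes values in c₀, and the image T({x_n}) satisfies ‖T(x_n) − T(x_m)‖_∞ > 1 for all n < m; in particular T(D) is not totally bounded in the Banach space c₀. -/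
open Filter Topology Pointwise

/-- Given a set `D` in a locally convex space, a sequence `{x n}` in `D` and a weak* null
sequence `{χ n}` of functionals with `|χ m (x n)| < 1/2` for `n < m` and `|χ m (x m)| > 3/2`,
the operator `T : E → 𝕂^ω`, `T x = (χ n x)_n`, is continuous, takes values in `c₀`, satisfies
`‖T (x n) - T (x m)‖_∞ > 1` for `n < m`, and `T '' D` is not totally bounded in the sup metric
(no finite `1/2`-net). -/
theorem stmt2 {E : Type*} [AddCommGroup E] [Module ℝ E] [TopologicalSpace E]
    [IsTopologicalAddGroup E] [ContinuousSMul ℝ E] [LocallyConvexSpace ℝ E]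
    (D : Set E) (x : ℕ → E) (hxD : ∀ n, x n ∈ D)
    (χ : ℕ → E →L[ℝ] ℝ)
    (hnull : ∀ v : E, Tendsto (fun n => χ n v) atTop (𝓝 0))
    (hsmall : ∀ n m : ℕ, n < m → |χ m (x n)| < 1 / 2)
    (hbig : ∀ m : ℕ, 3 / 2 < |χ m (x m)|) :
    Continuous (fun v : E => (fun n => χ n v : ℕ → ℝ)) ∧
    (∀ v : E, Tendsto (fun n => χ n v) atTop (𝓝 0)) ∧
    (∀ n m : ℕ, n < m → ∃ k : ℕ, 1 < |χ k (x n) - χ k (x m)|) ∧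
    ∀ F : Finset (ℕ → ℝ),
      ¬ ((fun v : E => (fun n => χ n v : ℕ → ℝ)) '' D ⊆
          ⋃ f ∈ F, {g : ℕ → ℝ | ∀ k, |g k - f k| ≤ 1 / 2}) := by
  have hsep : ∀ n m : ℕ, n < m → ∃ k : ℕ, 1 < |χ k (x n) - χ k (x m)| := by
    intro n m hnm
    refine ⟨m, ?_⟩
    have h1 := hsmall n m hnm
    have h2 := hbig m
    have := abs_sub_abs_le_abs_sub (χ m (x m)) (χ m (x n))
    have : |χ m (x n) - χ m (x m)| = |χ m (x m) - χ m (x n)| := abs_sub_comm _ _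
    rw [this]
    linarith [abs_sub_abs_le_abs_sub (χ m (x m)) (χ m (x n))]
  refine ⟨continuous_pi fun n => (χ n).continuous, hnull, hsep, ?_⟩
  intro F hF
  -- map each n to the f ∈ F whose ball contains T (x n)
  have hmem : ∀ n : ℕ, ∃ f ∈ F, ∀ k, |χ k (x n) - f k| ≤ 1 / 2 := by
    intro n
    have : (fun k => χ k (x n)) ∈ ⋃ f ∈ F, {g : ℕ → ℝ | ∀ k, |g k - f k| ≤ 1 / 2} :=
      hF ⟨x n, hxD n, rfl⟩
    simpa using this
  choose f hfF hfb using hmem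
  -- pigeonhole: two indices with same f
  have : ¬ Function.Injective f := by
    intro hinj
    exact Set.infinite_range_of_injective hinj
      (Set.Finite.subset F.finite_toSet (Set.range_subset_iff.2 hfF))
  rw [Function.not_injective_iff] at this
  obtain ⟨n, m, hfe, hne⟩ := this
  wlog hnm : n < m generalizing n m
  · exact this m n hfe.symm hne.symm (by omega)
  obtain ⟨k, hk⟩ := hsep n m hnm
  have h1 := hfb n k
  have h2 := hfb m k
  rw [hfe] at h1
  have : |χ k (x n) - χ k (x m)| ≤ 1 := by
    calc |χ k (x n) - χ k (x m)| ≤ |χ k (x n) - f m k| + |f m k - χ k (x m)| := abs_sub_le _ _ _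
    _ ≤ 1 := by rw [abs_sub_comm (f m k)]; linarith
  linarith
end

section
/- Every continuous linear operator T from a barrelled locally convex space L into the space C_p⁰(ω) (the space of null sequences c₀ equipped with the topology of pointwise convergence) remains continuous as an operator from L into the Banach space c₀ (with the sup norm). -/
open Filter Topology Pointwise ZeroAtInfty

/-- Norm bound via pointwise bounds for `C₀`. -/
lemma stmt6_norm_le {f : C₀(ℕ, ℝ)} {ε : ℝ} (hε : 0 ≤ ε) :
    ‖f‖ ≤ ε ↔ ∀ n, |f n| ≤ ε := by
  rw [← ZeroAtInftyContinuousMap.norm_toBCF_eq_norm,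
    BoundedContinuousFunction.norm_le hε]
  simp [Real.norm_eq_abs]

lemma stmt6_abs_le {f : C₀(ℕ, ℝ)} {n : ℕ} : |f n| ≤ ‖f‖ :=
  (stmt6_norm_le (norm_nonneg f)).1 le_rfl n

/-- Every continuous linear operator from a barrelled locally convex space `L` into
`C_p⁰(ω)` (the space `c₀` of null sequences with the topology of pointwise convergence)
remains continuous into the Banach space `c₀` (with the sup norm, modelled as `C₀(ℕ, ℝ)`). -/
theorem stmt6 {L : Type*} [AddCommGroup L] [Module ℝ L] [TopologicalSpace L]
    [IsTopologicalAddGroup L] [ContinuousSMul ℝ L]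
    (hbarrelled : ∀ B : Set L,
      IsClosed B → Balanced ℝ B → Convex ℝ B → Absorbent ℝ B → B ∈ 𝓝 (0 : L))
    (T : L →ₗ[ℝ] C₀(ℕ, ℝ))
    (hTp : ∀ n : ℕ, Continuous fun v : L => T v n) :
    Continuous fun v : L => T v := by
  -- key: for each ε > 0, the preimage of the closed ε-ball is a barrel
  have key : ∀ ε : ℝ, 0 < ε → {v : L | ‖T v‖ ≤ ε} ∈ 𝓝 (0 : L) := by
    intro ε hε
    set B : Set L := {v : L | ‖T v‖ ≤ ε}
    have hBeq : B = ⋂ n : ℕ, {v : L | |T v n| ≤ ε} := by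
      ext v
      simp only [B, Set.mem_setOf_eq, Set.mem_iInter, stmt6_norm_le hε.le]
    apply hbarrelled
    · rw [hBeq]
      exact isClosed_iInter fun n =>
        isClosed_le ((hTp n).abs) continuous_const
    · intro a ha v hv
      rcases hv with ⟨w, hw, rfl⟩
      simp only [B, Set.mem_setOf_eq] at hw ⊢
      rw [map_smul, stmt6_norm_le hε.le]
      intro n
      rw [ZeroAtInftyContinuousMap.smul_apply, smul_eq_mul, abs_mul]
      calc |a| * |T w n| ≤ 1 * ε :=
            mul_le_mul ha (stmt6_abs_le.trans hw) (abs_nonneg _) zero_le_one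
        _ = ε := one_mul ε
    · intro x hx y hy a b ha hb hab
      simp only [B, Set.mem_setOf_eq] at hx hy ⊢
      rw [map_add, map_smul, map_smul, stmt6_norm_le hε.le]
      intro n
      simp only [ZeroAtInftyContinuousMap.coe_add, Pi.add_apply,
        ZeroAtInftyContinuousMap.smul_apply, smul_eq_mul]
      calc |a * T x n + b * T y n| ≤ |a * T x n| + |b * T y n| := abs_add_le _ _
        _ = a * |T x n| + b * |T y n| := by
            rw [abs_mul, abs_mul, abs_of_nonneg ha, abs_of_nonneg hb]
        _ ≤ a * ε + b * ε := by
            gcongr <;> exact stmt6_abs_le.trans (by assumption)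
        _ = ε := by rw [← add_mul, hab, one_mul]
    · intro v
      refine Absorbs.of_norm ⟨‖T v‖ / ε + 1, fun c hc => ?_⟩
      rw [Real.norm_eq_abs] at hc
      have hc0 : c ≠ 0 := by
        intro h; rw [h, abs_zero] at hc
        exact absurd (lt_of_lt_of_le (by positivity) hc) (lt_irrefl 0)
      have habs : 0 < |c| := lt_of_lt_of_le (by positivity) hc
      intro x hx
      rw [Set.mem_singleton_iff] at hx
      -- keep hx
      rw [Set.mem_smul_set_iff_inv_smul_mem₀ hc0]
      simp only [B, Set.mem_setOf_eq, map_smul]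
      rw [stmt6_norm_le hε.le]
      intro n
      rw [ZeroAtInftyContinuousMap.smul_apply, smul_eq_mul, abs_mul, abs_inv,
        inv_mul_le_iff₀ habs]
      have h1 : ‖T v‖ / ε ≤ |c| := le_trans (le_add_of_nonneg_right zero_le_one) hc
      calc |T x n| ≤ ‖T x‖ := stmt6_abs_le
        _ = (‖T x‖ / ε) * ε := by field_simp
        _ = (‖T v‖ / ε) * ε := by rw [hx]
        _ ≤ |c| * ε := by gcongr
  -- continuity at 0, then everywhere
  have hcont0 : ContinuousAt (fun v : L => T v) 0 := by
    rw [ContinuousAt, map_zero]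
    rw [Metric.nhds_basis_closedBall.tendsto_right_iff]
    intro ε hε
    filter_upwards [key ε hε] with v hv
    simpa [Metric.mem_closedBall, dist_zero_right] using hv
  exact continuous_of_continuousAt_zero T.toAddMonoidHom hcont0
end

section
/- If a topological vector space X is selectively sequentially precompact at a subset S, then S is a bounded subset of X. -/
open Filter Topology Pointwise

/-- A sequence in a topological vector space is *Cauchy* if for every neighborhood `U` of zero
there is `N` such that `y m - y k ∈ U` for all `m, k ≥ N`. -/
def IsCauchySeqTVS {X : Type*} [AddCommGroup X] [TopologicalSpace X] (y : ℕ → X) : Prop :=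
  ∀ U ∈ 𝓝 (0 : X), ∃ N : ℕ, ∀ m ≥ N, ∀ k ≥ N, y m - y k ∈ U

/-- If a topological vector space `X` is selectively sequentially precompact at `S` (for any
open sets `U n` meeting `S` there are points `x n ∈ U n` with a Cauchy subsequence), then `S`
is bounded in `X`. -/
theorem stmt8 {X : Type*} [AddCommGroup X] [Module ℝ X] [TopologicalSpace X]
    [IsTopologicalAddGroup X] [ContinuousSMul ℝ X] (S : Set X)
    (hS : ∀ U : ℕ → Set X, (∀ n, IsOpen (U n)) → (∀ n, (U n ∩ S).Nonempty) →
      ∃ x : ℕ → X, (∀ n, x n ∈ U n) ∧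
        ∃ φ : ℕ → ℕ, StrictMono φ ∧ IsCauchySeqTVS (x ∘ φ)) :
    Bornology.IsVonNBounded ℝ S := by
  by_contra hB
  -- get a neighborhood of 0 not absorbing S; shrink to a closed one
  rw [Bornology.IsVonNBounded] at hB
  push_neg at hB
  obtain ⟨V, hV, hVa⟩ := hB
  obtain ⟨C, hC, hCclosed, hCV⟩ := exists_mem_nhds_isClosed_subset hV
  have hCa : ¬ Absorbs ℝ C S := fun h => hVa (h.mono_left hCV)
  rw [absorbs_iff_norm] at hCa
  push_neg at hCa
  -- choose scalars and points witnessing non-absorption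
  have key : ∀ n : ℕ, ∃ a : ℝ, (n : ℝ) + 1 ≤ ‖a‖ ∧ ∃ s ∈ S, s ∉ a • C := by
    intro n
    obtain ⟨a, ha, hna⟩ := hCa ((n : ℝ) + 1)
    rw [Set.not_subset] at hna
    obtain ⟨s, hs, hsn⟩ := hna
    exact ⟨a, ha, s, hs, hsn⟩
  choose a ha s hsS hs using key
  have hane : ∀ n, a n ≠ 0 := by
    intro n h
    have := ha n
    rw [h, norm_zero] at this
    nlinarith [Nat.cast_nonneg (α := ℝ) n]
  set U : ℕ → Set X := fun n => (a n • C)ᶜ with hU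
  have hUo : ∀ n, IsOpen (U n) := fun n =>
    (hCclosed.smul_of_ne_zero (hane n)).isOpen_compl
  have hUS : ∀ n, (U n ∩ S).Nonempty := fun n => ⟨s n, hs n, hsS n⟩
  obtain ⟨x, hx, φ, hφ, hcauchy⟩ := hS U hUo hUS
  -- pass to the canonical uniform structure
  letI : UniformSpace X := IsTopologicalAddGroup.rightUniformSpace X
  haveI : IsUniformAddGroup X := isUniformAddGroup_of_addCommGroup
  have hcs : CauchySeq (x ∘ φ) := by
    rw [cauchySeq_iff]
    intro W hW
    rw [uniformity_eq_comap_nhds_zero'] at hW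
    obtain ⟨T, hT, hTW⟩ := hW
    obtain ⟨N, hN⟩ := hcauchy T hT
    exact ⟨N, fun k hk l hl => hTW (by simpa [sub_eq_add_neg] using hN l hl k hk)⟩
  have htb : TotallyBounded (Set.range (x ∘ φ)) := hcs.totallyBounded_range
  have hbd : Bornology.IsVonNBounded ℝ (Set.range (x ∘ φ)) := htb.isVonNBounded ℝ
  have habs : Absorbs ℝ C (Set.range (x ∘ φ)) := hbd hC
  rw [absorbs_iff_norm] at habs
  obtain ⟨r, hr⟩ := habs
  obtain ⟨n, hn⟩ := exists_nat_ge r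
  have h1 : r ≤ ‖a (φ n)‖ := by
    have h2 : (n : ℝ) ≤ (φ n : ℝ) := by exact_mod_cast (hφ.id_le n)
    have := ha (φ n); linarith
  have hmem : x (φ n) ∈ a (φ n) • C := hr _ h1 ⟨n, rfl⟩
  exact hx (φ n) hmem
end

section
/- Every separable barrelled locally convex space E is Gelfand–Phillips: every limited subset of E is precompact. -/
open Filter Topology Pointwise

/-- A set `A` is *limited* if every weak* null sequence of continuous functionals converges to
`0` uniformly on `A`. -/
def LimitedSet {E : Type*} [AddCommGroup E] [Module ℝ E] [TopologicalSpace E]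
    (A : Set E) : Prop :=
  ∀ χ : ℕ → E →L[ℝ] ℝ, (∀ x : E, Tendsto (fun n => χ n x) atTop (𝓝 0)) →
    ∀ ε : ℝ, 0 < ε → ∀ᶠ n in atTop, ∀ a ∈ A, |χ n a| ≤ ε

/-- Centers-in-the-set finite net for a bounded family of real-valued functions on a
finite index type. -/
lemma aux_net {ι : Type*} [Fintype ι] (S : Set (ι → ℝ)) (C : ℝ)
    (hSC : ∀ f ∈ S, ∀ i, |f i| ≤ C) (δ : ℝ) (hδ : 0 < δ) :
    ∃ T, T ⊆ S ∧ T.Finite ∧ ∀ f ∈ S, ∃ g ∈ T, ∀ i, |f i - g i| < δ := by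
  have hS : TotallyBounded S := by
    refine (isCompact_closedBall (0 : ι → ℝ) (max C 0)).totallyBounded.subset ?_
    intro f hf
    rw [Metric.mem_closedBall]
    refine dist_pi_le_iff (le_max_right _ _) |>.2 fun i => ?_
    rw [Real.dist_eq, Pi.zero_apply, sub_zero]
    exact (hSC f hf i).trans (le_max_left _ _)
  rw [totallyBounded_iff_subset] at hS
  obtain ⟨T, hTS, hTfin, hcover⟩ := hS {p | dist p.1 p.2 < δ} (Metric.dist_mem_uniformity hδ)
  refine ⟨T, hTS, hTfin, fun f hf => ?_⟩
  obtain ⟨g, hgT, hfg⟩ := Set.mem_iUnion₂.1 (hcover hf)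
  exact ⟨g, hgT, fun i => by
    have := (dist_pi_lt_iff hδ).1 hfg i
    rwa [Real.dist_eq] at this⟩

/-- Every separable barrelled locally convex space is Gelfand–Phillips: every (bounded)
limited subset is precompact. -/
theorem stmt10 {E : Type*} [AddCommGroup E] [Module ℝ E] [TopologicalSpace E]
    [IsTopologicalAddGroup E] [ContinuousSMul ℝ E] [LocallyConvexSpace ℝ E]
    [TopologicalSpace.SeparableSpace E]
    (hbarrelled : ∀ B : Set E,
      IsClosed B → Balanced ℝ B → Convex ℝ B → Absorbent ℝ B → B ∈ 𝓝 (0 : E))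
    (A : Set E) (hAbdd : Bornology.IsVonNBounded ℝ A) (hA : LimitedSet A) :
    ∀ U ∈ 𝓝 (0 : E), ∃ F : Set E, F.Finite ∧ A ⊆ F + U := by
  classical
  intro U hU
  -- Step 0: find a closed, balanced, convex neighborhood `W ⊆ U` of zero.
  obtain ⟨U₂, hU₂, hU₂U⟩ := exists_nhds_zero_half hU
  obtain ⟨V, ⟨hVmem, hVbal, hVconv⟩, hVU₂⟩ := (nhds_hasBasis_absConvex ℝ E).mem_iff.1 hU₂
  set W := closure V with hWdef
  have hWmem : W ∈ 𝓝 (0 : E) := Filter.mem_of_superset hVmem subset_closure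
  have hWclosed : IsClosed W := isClosed_closure
  have hWconv : Convex ℝ W := hVconv.closure
  have hWbal : Balanced ℝ W := hVbal.closure
  have hWU : W ⊆ U := by
    intro x hx
    rw [mem_closure_iff_nhds_zero] at hx
    obtain ⟨y, hyV, hyx⟩ := hx V hVmem
    have hxy : x - y ∈ V := by
      have h1 : (-1 : ℝ) • (y - x) ∈ (-1 : ℝ) • V := Set.smul_mem_smul_set hyx
      have h2 := hVbal (-1) (by norm_num) h1
      simpa [neg_sub] using h2
    have : y + (x - y) = x := by abel
    rw [← this]
    exact hU₂U y (hVU₂ hyV) (x - y) (hVU₂ hxy)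
  have h0W : (0 : E) ∈ W := mem_of_mem_nhds hWmem
  have hWneg : ∀ y ∈ W, -y ∈ W := by
    intro y hy
    have h1 : (-1 : ℝ) • y ∈ (-1 : ℝ) • W := Set.smul_mem_smul_set hy
    have h2 := hWbal (-1) (by norm_num) h1
    simpa using h2
  -- The polar of W.
  set P : Set (E →L[ℝ] ℝ) := {χ | ∀ x ∈ W, |χ x| ≤ 1} with hPdef
  have h0P : (0 : E →L[ℝ] ℝ) ∈ P := fun x _ => by simp
  -- Separation: a point outside W is separated from W by an element of the polar.
  have hsep : ∀ x : E, x ∉ W → ∃ χ ∈ P, 1 < χ x := by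
    intro x hx
    obtain ⟨f, u, hfW, hux⟩ := geometric_hahn_banach_closed_point hWconv hWclosed hx
    have hu0 : 0 < u := by have := hfW 0 h0W; simpa using this
    refine ⟨u⁻¹ • f, ?_, ?_⟩
    · intro y hyW
      have h1 : f y < u := hfW y hyW
      have h2 : f (-y) < u := hfW (-y) (hWneg y hyW)
      rw [map_neg] at h2
      have : |f y| ≤ u := abs_le.2 ⟨by linarith, le_of_lt h1⟩
      have hval : (u⁻¹ • f) y = u⁻¹ * f y := rfl
      rw [hval, abs_mul, abs_of_pos (inv_pos.2 hu0)]
      calc u⁻¹ * |f y| ≤ u⁻¹ * u := by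
            exact mul_le_mul_of_nonneg_left this (le_of_lt (inv_pos.2 hu0))
        _ = 1 := inv_mul_cancel₀ (ne_of_gt hu0)
    · have hval : (u⁻¹ • f) x = u⁻¹ * f x := rfl
      rw [hval]
      rw [lt_inv_mul_iff₀ hu0]
      simpa using hux
  -- The polar is pointwise bounded (W is absorbent).
  have habs : ∀ x : E, ∃ c : ℝ, 0 < c ∧ ∀ χ ∈ P, |χ x| ≤ c := by
    intro x
    obtain ⟨r, hr0, hr⟩ := ((absorbent_nhds_zero hWmem : Absorbent ℝ W) x).exists_pos
    obtain ⟨w, hwW, hwx⟩ := by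
      have := hr r (by simp [abs_of_pos hr0]) (Set.mem_singleton x)
      exact this
    refine ⟨r, hr0, fun χ hχ => ?_⟩
    rw [← hwx, map_smul]
    have := hχ w hwW
    calc |r • χ w| = r * |χ w| := by
          rw [smul_eq_mul, abs_mul, abs_of_pos hr0]
      _ ≤ r * 1 := mul_le_mul_of_nonneg_left this (le_of_lt hr0)
      _ = r := mul_one r
  -- The polar is uniformly bounded on A (A is von Neumann bounded).
  obtain ⟨cA, hcA0, hcA⟩ : ∃ c : ℝ, 0 < c ∧ ∀ χ ∈ P, ∀ a ∈ A, |χ a| ≤ c := by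
    obtain ⟨r, hr0, hr⟩ := (hAbdd hWmem).exists_pos
    refine ⟨r, hr0, fun χ hχ a ha => ?_⟩
    obtain ⟨w, hwW, hwa⟩ := hr r (by simp [abs_of_pos hr0]) ha
    rw [← hwa, map_smul]
    calc |r • χ w| = r * |χ w| := by
          rw [smul_eq_mul, abs_mul, abs_of_pos hr0]
      _ ≤ r * 1 := mul_le_mul_of_nonneg_left (hχ w hwW) (le_of_lt hr0)
      _ = r := mul_one r
  haveI : Nonempty E := ⟨0⟩
  set u : ℕ → E := TopologicalSpace.denseSeq E with hu_def
  have hu : DenseRange u := TopologicalSpace.denseRange_denseSeq E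
  -- Step 1: uniform equicontinuity on the polar, using limitedness and separability.
  have key : ∀ ε : ℝ, 0 < ε → ∃ (D : Finset E) (δ : ℝ), 0 < δ ∧
      ∀ χ ∈ P, ∀ ψ ∈ P, (∀ d ∈ D, |χ d - ψ d| ≤ δ) → ∀ a ∈ A, |χ a - ψ a| ≤ ε := by
    intro ε hε
    by_contra hcon
    push_neg at hcon
    have hsel : ∀ n : ℕ, ∃ χ ∈ P, ∃ ψ ∈ P,
        (∀ d ∈ (Finset.range (n + 1)).image u, |χ d - ψ d| ≤ 1 / (n + 1)) ∧
        ∃ a ∈ A, ε < |χ a - ψ a| := by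
      intro n
      exact hcon ((Finset.range (n + 1)).image u) (1 / (n + 1)) (by positivity)
    choose χs hχsP ψs hψsP hclose a haA hfar using hsel
    set η : ℕ → E →L[ℝ] ℝ := fun n => χs n - ψs n with hη_def
    have hηd : ∀ n, ∀ k ≤ n, |η n (u k)| ≤ 1 / (n + 1) := by
      intro n k hk
      have : u k ∈ (Finset.range (n + 1)).image u :=
        Finset.mem_image_of_mem u (Finset.mem_range.2 (Nat.lt_succ_of_le hk))
      simpa [hη_def, ContinuousLinearMap.sub_apply] using hclose n (u k) this
    have hηW : ∀ n, ∀ y ∈ W, |η n y| ≤ 2 := by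
      intro n y hy
      have h1 := hχsP n y hy
      have h2 := hψsP n y hy
      have : η n y = χs n y - ψs n y := rfl
      rw [this]
      calc |χs n y - ψs n y| ≤ |χs n y| + |ψs n y| := abs_sub _ _
        _ ≤ 1 + 1 := add_le_add h1 h2
        _ = 2 := by norm_num
    have hnull : ∀ x : E, Tendsto (fun n => η n x) atTop (𝓝 0) := by
      intro x
      rw [Metric.tendsto_atTop]
      intro ε' hε'
      -- choose a dense-sequence element close to x
      have hxcl : x ∈ closure (Set.range u) := by
        rw [hu.closure_range]; trivial
      rw [mem_closure_iff_nhds_zero] at hxcl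
      have hsmul : (ε' / 8) • W ∈ 𝓝 (0 : E) :=
        (set_smul_mem_nhds_zero_iff (by positivity : (ε' / 8 : ℝ) ≠ 0)).2 hWmem
      obtain ⟨y, ⟨k, hky⟩, hyx⟩ := hxcl _ hsmul
      obtain ⟨w, hwW, hwyx⟩ := hyx
      obtain ⟨N, hN⟩ := exists_nat_gt (2 / ε')
      refine ⟨max k N, fun n hn => ?_⟩
      have hkn : k ≤ n := le_trans (le_max_left _ _) hn
      have hNn : N ≤ n := le_trans (le_max_right _ _) hn
      rw [Real.dist_eq, sub_zero]
      have hstep1 : |η n (y - x)| ≤ ε' / 2 := by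
        rw [← hwyx, map_smul]
        have := hηW n w hwW
        calc |(ε' / 8) • η n w| = (ε' / 8) * |η n w| := by
              rw [smul_eq_mul, abs_mul, abs_of_pos (by positivity)]
          _ ≤ (ε' / 8) * 2 := mul_le_mul_of_nonneg_left this (by positivity)
          _ ≤ ε' / 2 := by linarith
      have hstep2 : |η n y| ≤ 1 / (n + 1) := by rw [← hky]; exact hηd n k hkn
      have hsmall : (1 : ℝ) / (n + 1) < ε' / 2 := by
        rw [div_lt_iff₀ (by positivity)]
        have h1 : (2 : ℝ) / ε' < N := hN
        have h2 : (N : ℝ) ≤ n := Nat.cast_le.2 hNn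
        have h3 : (2 : ℝ) / ε' < (n : ℝ) + 1 := by linarith
        rw [div_lt_iff₀ hε'] at h3
        calc (1 : ℝ) = (2 : ℝ) * (1/2) := by norm_num
          _ < (((n : ℝ) + 1) * ε') * (1/2) := by nlinarith
          _ = ε' / 2 * ((n:ℝ)+1) := by ring
        -- goal shape : 1 < ε' / 2 * (n + 1)
      have : η n x = η n y - η n (y - x) := by
        rw [map_sub]; abel
      rw [this]
      calc |η n y - η n (y - x)| ≤ |η n y| + |η n (y - x)| := abs_sub _ _
        _ ≤ 1 / (n + 1) + ε' / 2 := add_le_add hstep2 hstep1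
        _ < ε' / 2 + ε' / 2 := by linarith
        _ = ε' := by ring
    have := hA η hnull ε hε
    obtain ⟨N, hNe⟩ := this.exists_forall_of_atTop
    have h1 := hNe N (le_refl N) (a N) (haA N)
    have h2 := hfar N
    have : η N (a N) = χs N (a N) - ψs N (a N) := rfl
    rw [this] at h1
    linarith [h2, h1]
  -- Step 2: a finite (1/4)-net (for uniform distance on A) in the polar.
  obtain ⟨D, δ, hδ0, hDδ⟩ := key (1/4) (by norm_num)
  choose c hc0 hc using habs
  obtain ⟨C, hC⟩ := Finite.exists_le (fun d : ↥D => c (d : E))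
  set Φ : (E →L[ℝ] ℝ) → (↥D → ℝ) := fun χ => fun d => χ (d : E) with hΦ_def
  set S : Set (↥D → ℝ) := Φ '' P with hS_def
  have hSC : ∀ f ∈ S, ∀ d : ↥D, |f d| ≤ C := by
    rintro f ⟨χ, hχ, rfl⟩ d
    exact le_trans (hc (d : E) χ hχ) (hC d)
  obtain ⟨T, hTS, hTfin, hTnet⟩ := aux_net S C hSC δ hδ0
  have hTpre : ∀ g ∈ T, ∃ χ ∈ P, Φ χ = g := fun g hg => hTS hg
  choose! q hqP hq using hTpre
  have hstar : ∀ χ ∈ P, ∃ g ∈ T, ∀ b ∈ A, |χ b - q g b| ≤ 1/4 := by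
    intro χ hχ
    obtain ⟨g, hgT, hgnet⟩ := hTnet (Φ χ) ⟨χ, hχ, rfl⟩
    refine ⟨g, hgT, ?_⟩
    refine hDδ χ hχ (q g) (hqP g hgT) ?_
    intro d hd
    have h1 := hgnet ⟨d, hd⟩
    have h2 : q g d = g ⟨d, hd⟩ := congrFun (hq g hgT) ⟨d, hd⟩
    rw [← h2] at h1
    exact le_of_lt h1
  -- Step 3: a finite (1/4)-net (in the coordinates given by the net functionals) inside A.
  set T' : Finset (↥D → ℝ) := hTfin.toFinset with hT'_def
  set Φ₂ : E → (↥T' → ℝ) := fun x => fun t => q (t : ↥D → ℝ) x with hΦ₂_def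
  set S₂ : Set (↥T' → ℝ) := Φ₂ '' A with hS₂_def
  have hS₂C : ∀ f ∈ S₂, ∀ t : ↥T', |f t| ≤ cA := by
    rintro f ⟨b, hb, rfl⟩ t
    have htT : (t : ↥D → ℝ) ∈ T := hTfin.mem_toFinset.1 t.2
    exact hcA (q (t : ↥D → ℝ)) (hqP _ htT) b hb
  obtain ⟨T₂, hT₂S₂, hT₂fin, hT₂net⟩ := aux_net S₂ cA hS₂C (1/4) (by norm_num)
  have hT₂pre : ∀ h ∈ T₂, ∃ b ∈ A, Φ₂ b = h := fun h hh => hT₂S₂ hh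
  choose! r hrA hr using hT₂pre
  refine ⟨r '' T₂, hT₂fin.image r, ?_⟩
  intro x hx
  obtain ⟨h, hhT₂, hhnet⟩ := hT₂net (Φ₂ x) ⟨x, hx, rfl⟩
  set f := r h with hf_def
  have hfA : f ∈ A := hrA h hhT₂
  have hnetf : ∀ t : ↥T', |q (t : ↥D → ℝ) x - q (t : ↥D → ℝ) f| < 1/4 := by
    intro t
    have h1 := hhnet t
    have h2 : q (t : ↥D → ℝ) f = h t := congrFun (hr h hhT₂) t
    rwa [← h2] at h1
  have hxfW : x - f ∈ W := by
    by_contra hnot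
    obtain ⟨χ, hχP, hχ1⟩ := hsep _ hnot
    obtain ⟨g, hgT, hgnet⟩ := hstar χ hχP
    have hgT' : g ∈ T' := hTfin.mem_toFinset.2 hgT
    have h1 := hgnet x hx
    have h2 := hgnet f hfA
    have h3 := hnetf ⟨g, hgT'⟩
    have hval : χ (x - f) = χ x - χ f := map_sub χ x f
    have : |χ (x - f)| < 1 := by
      rw [hval]
      have : χ x - χ f = (χ x - q g x) + (q g x - q g f) + (q g f - χ f) := by ring
      rw [this]
      calc |(χ x - q g x) + (q g x - q g f) + (q g f - χ f)|
          ≤ |(χ x - q g x) + (q g x - q g f)| + |q g f - χ f| := abs_add_le _ _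
        _ ≤ |χ x - q g x| + |q g x - q g f| + |q g f - χ f| :=
            add_le_add_left (abs_add_le _ _) _
        _ < 1 := by
            have h2' : |q g f - χ f| ≤ 1/4 := by rw [abs_sub_comm]; exact h2
            linarith
    have := le_abs_self (χ (x - f))
    linarith
  have : x = f + (x - f) := by abel
  rw [this]
  exact Set.add_subset_add_left hWU (Set.add_mem_add (Set.mem_image_of_mem r hhT₂) hxfW)
end

section
/- For every selectively sequentially pseudocompact compact Hausdorff space K, the Banach space C(K) (with the sup norm) has the Gelfand–Phillips property: every limited subset of C(K) is relatively norm compact. -/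
open Filter Topology

/-- A set `A` in a normed space `E` is *limited* if every weak* null sequence in `E'`
converges to `0` uniformly on `A`. -/
def LimitedSetB {E : Type*} [NormedAddCommGroup E] [NormedSpace ℝ E] (A : Set E) : Prop :=
  ∀ χ : ℕ → E →L[ℝ] ℝ, (∀ x : E, Tendsto (fun n => χ n x) atTop (𝓝 0)) →
    ∀ ε : ℝ, 0 < ε → ∀ᶠ n in atTop, ∀ a ∈ A, |χ n a| ≤ ε

namespace GP14

variable {K : Type*} [TopologicalSpace K] [CompactSpace K]

/-- Evaluation at a point as a continuous linear functional on `C(K, ℝ)`. -/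
noncomputable def evalCLM' (x : K) : C(K, ℝ) →L[ℝ] ℝ :=
  LinearMap.mkContinuous
    { toFun := fun f => f x
      map_add' := fun f g => rfl
      map_smul' := fun c f => rfl } 1
    (fun f => by simpa using f.norm_coe_le_norm x)

@[simp] lemma evalCLM'_apply (x : K) (f : C(K, ℝ)) : evalCLM' x f = f x := rfl

lemma bounded_of_limited {A : Set C(K, ℝ)} (hA : LimitedSetB A) :
    ∃ M : ℝ, 0 ≤ M ∧ ∀ f ∈ A, ‖f‖ ≤ M := by
  by_contra h
  push_neg at h
  have key : ∀ n : ℕ, ∃ f ∈ A, ∃ y : K, ((n : ℝ) + 1) < ‖f y‖ := by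
    intro n
    obtain ⟨f, hfA, hf⟩ := h ((n : ℝ) + 1) (by positivity)
    refine ⟨f, hfA, ?_⟩
    by_contra hy
    push_neg at hy
    exact absurd ((ContinuousMap.norm_le f (by positivity)).2 hy) (not_le.2 hf)
  choose f hfA y hy using key
  set χ : ℕ → C(K, ℝ) →L[ℝ] ℝ := fun n => ((n : ℝ) + 1)⁻¹ • evalCLM' (y n) with hχ
  have hχapp : ∀ n (g : C(K, ℝ)), χ n g = ((n : ℝ) + 1)⁻¹ * g (y n) := fun n g => rfl
  have hnull : ∀ g : C(K, ℝ), Tendsto (fun n => χ n g) atTop (𝓝 0) := by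
    intro g
    refine squeeze_zero_norm (a := fun n : ℕ => (1 / ((n : ℝ) + 1)) * ‖g‖) (fun n => ?_) ?_
    · show ‖χ n g‖ ≤ 1 / ((n : ℝ) + 1) * ‖g‖
      have h1 : ‖χ n g‖ = ((n : ℝ) + 1)⁻¹ * ‖g (y n)‖ := by
        rw [hχapp, norm_mul, Real.norm_eq_abs ((n : ℝ) + 1)⁻¹, abs_of_nonneg (by positivity)]
      calc ‖χ n g‖ = ((n : ℝ) + 1)⁻¹ * ‖g (y n)‖ := h1
        _ ≤ ((n : ℝ) + 1)⁻¹ * ‖g‖ :=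
          mul_le_mul_of_nonneg_left (g.norm_coe_le_norm (y n)) (by positivity)
        _ = 1 / ((n : ℝ) + 1) * ‖g‖ := by rw [one_div]
    · simpa using tendsto_one_div_add_atTop_nhds_zero_nat.mul_const ‖g‖
  obtain ⟨N, hN⟩ := eventually_atTop.1 (hA χ hnull 1 one_pos)
  have h1 := hN N le_rfl (f N) (hfA N)
  rw [hχapp] at h1
  have hpos : (0 : ℝ) < (N : ℝ) + 1 := by positivity
  have h2 : (1 : ℝ) < ((N : ℝ) + 1)⁻¹ * ‖f N (y N)‖ :=
    calc (1 : ℝ) = ((N : ℝ) + 1)⁻¹ * ((N : ℝ) + 1) := (inv_mul_cancel₀ hpos.ne').symm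
    _ < ((N : ℝ) + 1)⁻¹ * ‖f N (y N)‖ :=
      mul_lt_mul_of_pos_left (hy N) (inv_pos.2 hpos)
  rw [Real.norm_eq_abs] at h2
  have h3 : |((N : ℝ) + 1)⁻¹ * f N (y N)| = ((N : ℝ) + 1)⁻¹ * |f N (y N)| := by
    rw [abs_mul, abs_of_nonneg (by positivity : (0:ℝ) ≤ ((N : ℝ) + 1)⁻¹)]
  rw [h3] at h1
  linarith

lemma not_bad {A : Set C(K, ℝ)}
    (hK : ∀ U : ℕ → Set K, (∀ n, IsOpen (U n)) → (∀ n, (U n).Nonempty) →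
      ∃ x : ℕ → K, (∀ n, x n ∈ U n) ∧
        ∃ φ : ℕ → ℕ, StrictMono φ ∧ ∃ p : K, Tendsto (x ∘ φ) atTop (𝓝 p))
    (hA : LimitedSetB A) (p : K) {ε : ℝ} (hε : 0 < ε)
    (hbad : ∀ O : Set K, IsOpen O → p ∈ O → ∃ f ∈ A, ∃ x ∈ O, ε ≤ dist (f p) (f x)) :
    False := by
  classical
  let T := {O : Set K // IsOpen O ∧ p ∈ O}
  have key : ∀ O : T, ∃ f, f ∈ A ∧ ∃ x, x ∈ O.1 ∧ ε ≤ dist (f p) (f x) := by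
    intro O
    obtain ⟨f, hf, x, hx, hd⟩ := hbad O.1 O.2.1 O.2.2
    exact ⟨f, hf, x, hx, hd⟩
  choose F hFA X hX hdist using key
  let U : T → Set K := fun O => O.1 ∩ {y | ε / 2 < dist (F O p) (F O y)}
  have hUopen : ∀ O : T, IsOpen (U O) := fun O =>
    O.2.1.inter (isOpen_lt continuous_const (continuous_const.dist (F O).continuous))
  have hUne : ∀ O : T, (U O).Nonempty := fun O =>
    ⟨X O, hX O, lt_of_lt_of_le (half_lt_self hε) (hdist O)⟩
  let g : T → T := fun O =>
    ⟨O.1 ∩ {y | dist (F O p) (F O y) < ε / 8},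
      O.2.1.inter (isOpen_lt (continuous_const.dist (F O).continuous)
        continuous_const),
      O.2.2, by simp only [Set.mem_setOf_eq, dist_self]; positivity⟩
  let C : ℕ → T := fun n => g^[n] ⟨Set.univ, isOpen_univ, Set.mem_univ p⟩
  have hsucc : ∀ n, C (n + 1) = g (C n) := fun n =>
    Function.iterate_succ_apply' g n _
  have hCsub : ∀ n, (C (n + 1)).1 ⊆ {y | dist (F (C n) p) (F (C n) y) < ε / 8} := by
    intro n
    rw [hsucc n]
    exact Set.inter_subset_right
  have hmono : ∀ n m, n ≤ m → (C m).1 ⊆ (C n).1 := by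
    intro n m h
    induction h with
    | refl => exact subset_rfl
    | @step k hk ih =>
        refine subset_trans ?_ ih
        rw [hsucc k]
        exact Set.inter_subset_left
  obtain ⟨z, hz, φ, hφ, q, hq⟩ := hK (fun n => U (C n)) (fun n => hUopen _)
    (fun n => hUne _)
  set χ : ℕ → C(K, ℝ) →L[ℝ] ℝ := fun k => evalCLM' (z (φ k)) - evalCLM' q with hχ
  have hχapp : ∀ k (f : C(K, ℝ)), χ k f = f (z (φ k)) - f q := fun k f => rfl
  have hnull : ∀ f : C(K, ℝ), Tendsto (fun k => χ k f) atTop (𝓝 0) := by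
    intro f
    have h1 : Tendsto (fun k => f (z (φ k))) atTop (𝓝 (f q)) :=
      (f.continuous.tendsto q).comp hq
    simpa [hχapp] using h1.sub_const (f q)
  obtain ⟨N, hN⟩ := eventually_atTop.1 (hA χ hnull (ε / 8) (by positivity))
  set n := φ N with hn
  set m := φ (N + 1) with hm
  have hnm : n + 1 ≤ m := hφ (Nat.lt_succ_self N)
  set f0 := F (C n) with hf0
  have hf0A : f0 ∈ A := hFA (C n)
  have hzn : z n ∈ U (C n) := hz n
  have hd1 : ε / 2 < dist (f0 p) (f0 (z n)) := hzn.2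
  have hzm : z m ∈ (C m).1 := (hz m).1
  have hd2 : dist (f0 p) (f0 (z m)) < ε / 8 := hCsub n (hmono (n + 1) m hnm hzm)
  have hb1 : |f0 (z n) - f0 q| ≤ ε / 8 := by
    have := hN N le_rfl f0 hf0A
    rwa [hχapp] at this
  have hb2 : |f0 (z m) - f0 q| ≤ ε / 8 := by
    have := hN (N + 1) (Nat.le_succ N) f0 hf0A
    rwa [hχapp] at this
  rw [Real.dist_eq] at hd1 hd2
  have t1 : |f0 p - f0 (z n)| ≤ |f0 p - f0 (z m)| + |f0 (z m) - f0 (z n)| :=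
    abs_sub_le _ _ _
  have t2 : |f0 (z m) - f0 (z n)| ≤ |f0 (z m) - f0 q| + |f0 q - f0 (z n)| :=
    abs_sub_le _ _ _
  have t3 : |f0 q - f0 (z n)| = |f0 (z n) - f0 q| := abs_sub_comm _ _
  linarith

end GP14

/-- For every selectively sequentially pseudocompact compact Hausdorff space `K`, the Banach
space `C(K)` is Gelfand–Phillips: every limited subset is relatively norm compact. -/
theorem stmt14 {K : Type*} [TopologicalSpace K] [CompactSpace K] [T2Space K]
    (hK : ∀ U : ℕ → Set K, (∀ n, IsOpen (U n)) → (∀ n, (U n).Nonempty) →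
      ∃ x : ℕ → K, (∀ n, x n ∈ U n) ∧
        ∃ φ : ℕ → ℕ, StrictMono φ ∧ ∃ p : K, Tendsto (x ∘ φ) atTop (𝓝 p)) :
    ∀ A : Set C(K, ℝ), LimitedSetB A → IsCompact (closure A) := by
  intro A hA
  obtain ⟨M, hM0, hM⟩ := GP14.bounded_of_limited hA
  set e := ContinuousMap.isometryEquivBoundedOfCompact K ℝ with he
  have hequi : Equicontinuous ((↑) : (e '' A) → K → ℝ) := by
    intro p
    rw [Metric.equicontinuousAt_iff_right]
    intro ε hε
    by_contra hcon
    refine GP14.not_bad hK hA p hε ?_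
    intro O hO hpO
    by_contra hno
    push_neg at hno
    refine hcon (Filter.eventually_of_mem (hO.mem_nhds hpO) fun y hy i => ?_)
    obtain ⟨_, g, hg, rfl⟩ := i
    have := hno g hg y hy
    simpa [dist_comm] using (lt_of_not_ge (fun hle => absurd this (not_lt.2 hle)) :
      dist ((e g) p) ((e g) y) < ε)
  have hcomp : IsCompact (closure (e '' A)) := by
    refine BoundedContinuousFunction.arzela_ascoli (Metric.closedBall (0 : ℝ) M)
      (isCompact_closedBall 0 M) (e '' A) ?_ hequi
    rintro f x ⟨g, hg, rfl⟩
    rw [Metric.mem_closedBall, Real.dist_eq, sub_zero]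
    calc |(e g) x| = ‖g x‖ := by simp [he]
    _ ≤ ‖g‖ := g.norm_coe_le_norm x
    _ ≤ M := hM g hg
  have hfinal := hcomp.image e.toHomeomorph.symm.continuous
  rw [Homeomorph.image_closure] at hfinal
  have himg : e.toHomeomorph.symm '' (⇑e '' A) = A := by
    ext f
    simp only [he, Set.mem_image]
    constructor
    · rintro ⟨b, ⟨a, ha, rfl⟩, rfl⟩
      have : (ContinuousMap.isometryEquivBoundedOfCompact K ℝ).toHomeomorph.symm
          ((ContinuousMap.isometryEquivBoundedOfCompact K ℝ) a) = a := by
        ext x; rfl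
      rwa [this]
    · intro hf
      exact ⟨(ContinuousMap.isometryEquivBoundedOfCompact K ℝ) f, ⟨f, hf, rfl⟩, by ext x; rfl⟩
  rwa [himg] at hfinal
end

section
/- Let τ and 𝒯 be locally convex topologies on C(X) with 𝒯_p ⊆ τ ⊆ 𝒯 ⊆ 𝒯_k (between the pointwise and compact-open topologies), where X is Tychonoff. If (C(X), τ) is Gelfand–Phillips, then so is (C(X), 𝒯). In particular, if C_p(X) is Gelfand–Phillips then so is C_k(X). -/
open Filter Topology Pointwise

section Defs

variable {E : Type*} [AddCommGroup E] [Module ℝ E]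

/-- A barrel for the topology `t`: a `t`-closed, balanced, convex, absorbing set. -/
def IsBarrelT (t : TopologicalSpace E) (B : Set E) : Prop :=
  @IsClosed E t B ∧ Balanced ℝ B ∧ Convex ℝ B ∧ Absorbent ℝ B

/-- A weak* null sequence of `t`-continuous linear functionals. -/
def WeakStarNullT (t : TopologicalSpace E) (χ : ℕ → (E →ₗ[ℝ] ℝ)) : Prop :=
  (∀ n, @Continuous _ _ t _ (χ n)) ∧ ∀ x : E, Tendsto (fun n => χ n x) atTop (𝓝 0)

/-- A set is `t`-barrel-bounded if it is absorbed by every `t`-barrel. -/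
def BarrelBoundedT (t : TopologicalSpace E) (A : Set E) : Prop :=
  ∀ B : Set E, IsBarrelT t B → ∃ c : ℝ, A ⊆ c • B

/-- A set is `t`-limited if every weak* null sequence of `t`-continuous functionals converges
to `0` uniformly on it. -/
def LimitedT (t : TopologicalSpace E) (A : Set E) : Prop :=
  ∀ χ : ℕ → (E →ₗ[ℝ] ℝ), WeakStarNullT t χ →
    ∀ ε : ℝ, 0 < ε → ∀ᶠ n in atTop, ∀ a ∈ A, |χ n a| ≤ ε

/-- `t`-barrel-precompactness. -/
def BarrelPrecompactT (t : TopologicalSpace E) (A : Set E) : Prop :=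
  ∀ B : Set E, IsBarrelT t B → ∃ F : Set E, F.Finite ∧ A ⊆ F + B

/-- `(E, t)` is Gelfand–Phillips if every barrel-bounded limited set is barrel-precompact. -/
def GelfandPhillipsT (t : TopologicalSpace E) : Prop :=
  ∀ A : Set E, BarrelBoundedT t A → LimitedT t A → BarrelPrecompactT t A

end Defs

/-- The topology of pointwise convergence on `C(X, ℝ)`. -/
def TpTop (X : Type*) [TopologicalSpace X] : TopologicalSpace C(X, ℝ) :=
  TopologicalSpace.induced (fun f : C(X, ℝ) => (fun x => f x : X → ℝ)) Pi.topologicalSpace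


section GPHelpers

open Set Uniformity BoundedContinuousFunction

lemma baire_barrel_mem_nhds {E : Type*} [AddCommGroup E] [Module ℝ E] [TopologicalSpace E]
    [IsTopologicalAddGroup E] [ContinuousSMul ℝ E] [BaireSpace E] {B : Set E}
    (hcl : IsClosed B) (hbal : Balanced ℝ B) (hconv : Convex ℝ B) (habs : Absorbent ℝ B) :
    B ∈ 𝓝 (0 : E) := by
  have : Nonempty E := ⟨0⟩
  have hcover : (⋃ n : ℕ, ((n : ℝ) + 1) • B) = univ := by
    ext x
    simp only [mem_iUnion, mem_univ, iff_true]
    obtain ⟨r, hr⟩ := absorbs_iff_norm.1 (habs x)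
    obtain ⟨n, hn⟩ := exists_nat_ge r
    refine ⟨n, ?_⟩
    have h1 : r ≤ ‖((n:ℝ)+1)‖ := by
      rw [Real.norm_eq_abs, abs_of_nonneg (by positivity)]
      linarith
    exact hr _ h1 rfl
  have hclosed : ∀ n : ℕ, IsClosed (((n : ℝ) + 1) • B) := fun n =>
    hcl.smul_of_ne_zero (by positivity)
  obtain ⟨n, y, hy⟩ := nonempty_interior_of_iUnion_of_closed hclosed hcover
  rw [interior_smul₀ (by positivity : ((n:ℝ)+1) ≠ 0)] at hy
  obtain ⟨z, hz, -⟩ := hy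
  have hzB : z ∈ B := interior_subset hz
  have hnegz : (-1 : ℝ) • z ∈ B := hbal (a := (-1:ℝ)) (by norm_num) (smul_mem_smul_set hzB)
  have h0 : (0 : E) ∈ interior B := by
    have := hconv.combo_interior_self_mem_interior hz hnegz (by norm_num : (0:ℝ) < 1/2)
      (by norm_num : (0:ℝ) ≤ 1/2) (by norm_num)
    rwa [smul_smul, show (1/2 : ℝ) • z + (1/2 * -1 : ℝ) • z = 0 by
      rw [← add_smul]; norm_num] at this
  exact mem_interior_iff_mem_nhds.1 h0


variable {X : Type*} [TopologicalSpace X]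

lemma co_nhds_basis (f : C(X,ℝ)) :
    (𝓝 f).HasBasis (fun p : Set X × Set (ℝ × ℝ) => IsCompact p.1 ∧ p.2 ∈ 𝓤 ℝ)
      (fun p => {g : C(X,ℝ) | ∀ x ∈ p.1, (f x, g x) ∈ p.2}) :=
  nhds_basis_uniformity' ContinuousMap.hasBasis_compactConvergenceUniformity

lemma ev_norm_ge : ∀ᶠ c : ℝ in Bornology.cobounded ℝ, 1 ≤ ‖c‖ :=
  tendsto_norm_cobounded_atTop.eventually (eventually_ge_atTop 1)

/-- the set of points having an open nbhd `U` such that all functions vanishing off `U` lie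
in `B` -/
def goodSet (B : Set C(X,ℝ)) : Set X :=
  {x | ∃ U : Set X, IsOpen U ∧ x ∈ U ∧ ∀ g : C(X,ℝ), (∀ y ∉ U, g y = 0) → g ∈ B}

set_option maxHeartbeats 1000000 in
lemma funct_bounded {B : Set C(X,ℝ)}
    (hcl : IsClosed B) (hbal : Balanced ℝ B) (hconv : Convex ℝ B) (habs : Absorbent ℝ B)
    (f : C(X,ℝ)) : ∃ M, ∀ x ∈ (goodSet B)ᶜ, |f x| ≤ M := by
  by_contra hcon
  push_neg at hcon
  choose pt hptA hpt using hcon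
  set u : ℕ → X := fun n => Nat.rec (pt 5) (fun _ x => pt (|f x| + 5)) n with hu_def
  set c : ℕ → ℝ := fun n => |f (u n)| with hc_def
  have hu : ∀ n, u n ∈ (goodSet B)ᶜ := by
    intro n
    cases n with
    | zero => exact hptA 5
    | succ m => exact hptA _
  have hc0 : 5 < c 0 := hpt 5
  have hstep : ∀ n, c n + 5 < c (n+1) := fun n => hpt (c n + 5)
  have hmono : ∀ m n, m < n → c m + 5 ≤ c n := by
    intro m n hmn
    induction n with
    | zero => omega
    | succ k ih =>
      rcases Nat.lt_succ_iff_lt_or_eq.1 hmn with h | h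
      · have := hstep k
        have := ih h
        linarith
      · subst h
        exact (hstep m).le
  have hlow : ∀ n : ℕ, 5 * (n:ℝ) < c n := by
    intro n
    induction n with
    | zero => simpa using hc0.trans_le' (by norm_num)
    | succ k ih =>
      have := hstep k
      push_cast
      linarith
  set U : ℕ → Set X := fun n => (fun x => |f x|) ⁻¹' Ioo (c n - 1) (c n + 1) with hU_def
  have hUopen : ∀ n, IsOpen (U n) := fun n =>
    isOpen_Ioo.preimage (map_continuous f).abs
  have huU : ∀ n, u n ∈ U n := fun n => by
    simp only [hU_def, mem_preimage, mem_Ioo]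
    constructor <;> [linarith; linarith]
  have hg : ∀ n, ∃ g : C(X,ℝ), (∀ y ∉ U n, g y = 0) ∧ g ∉ B := by
    intro n
    by_contra h
    push_neg at h
    exact (hu n) ⟨U n, hUopen n, huU n, fun g hgv => h g hgv⟩
  choose g0 hg0v hg0B using hg
  set G : ℕ → C(X,ℝ) := fun n => (2^n : ℝ) • g0 n with hG_def
  have hGv : ∀ n y, y ∉ U n → G n y = 0 := by
    intro n y hy
    show (2^n : ℝ) * g0 n y = 0
    rw [hg0v n y hy, mul_zero]
  have gap : ∀ m n, m ≠ n → 5 ≤ |c m - c n| := by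
    intro m n hmn
    rcases lt_trichotomy m n with h | h | h
    · rw [abs_sub_comm, abs_of_nonneg (by linarith [hmono m n h])]
      linarith [hmono m n h]
    · exact absurd h hmn
    · rw [abs_of_nonneg (by linarith [hmono n m h])]
      linarith [hmono n m h]
  have window : ∀ x : X, ∃ n₀ : ℕ, ∃ N : Set X, IsOpen N ∧ x ∈ N ∧
      ∀ m, m ≠ n₀ → ∀ y ∈ N, G m y = 0 := by
    intro x
    set N : Set X := (fun y => |f y|) ⁻¹' Ioo (|f x| - 1) (|f x| + 1) with hN_def
    have hNopen : IsOpen N := isOpen_Ioo.preimage (map_continuous f).abs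
    have hxN : x ∈ N := by
      simp only [hN_def, mem_preimage, mem_Ioo]
      constructor <;> linarith
    have key : ∀ m, (∃ y ∈ N, y ∈ U m) → abs (c m - |f x|) < 2 := by
      rintro m ⟨y, hyN, hyU⟩
      simp only [hN_def, mem_preimage, mem_Ioo] at hyN
      simp only [hU_def, mem_preimage, mem_Ioo] at hyU
      rw [abs_lt]
      constructor <;> linarith
    by_cases hex : ∃ m, ∃ y ∈ N, y ∈ U m
    · obtain ⟨n₀, hn₀⟩ := hex
      refine ⟨n₀, N, hNopen, hxN, fun m hm y hy => ?_⟩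
      by_contra hGm
      have hyU : y ∈ U m := by
        by_contra hyU
        exact hGm (hGv m y hyU)
      have h1 := key m ⟨y, hy, hyU⟩
      have h2 := key n₀ hn₀
      have := gap m n₀ hm
      rw [abs_lt] at h1 h2
      rcases abs_cases (c m - c n₀) with ⟨he, _⟩ | ⟨he, _⟩ <;> rw [he] at this <;> linarith
    · push_neg at hex
      refine ⟨0, N, hNopen, hxN, fun m _ y hy => ?_⟩
      by_contra hGm
      have hyU : y ∈ U m := by
        by_contra hyU
        exact hGm (hGv m y hyU)
      exact absurd hyU (hex m y hy)
  have hwin' : ∀ x : X, ∃ n₀, ∀ m, m ≠ n₀ → G m x = 0 := by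
    intro x
    obtain ⟨n₀, N, _, hxN, hv⟩ := window x
    exact ⟨n₀, fun m hm => hv m hm x hxN⟩
  have hts : ∀ (s : ℕ →ᵇ ℝ) (x : X) (n₀ : ℕ), (∀ m, m ≠ n₀ → G m x = 0) →
      (∑' n, s n * G n x) = s n₀ * G n₀ x := by
    intro s x n₀ h
    exact tsum_eq_single n₀ (fun m hm => by rw [h m hm, mul_zero])
  have hΦc : ∀ s : ℕ →ᵇ ℝ, Continuous (fun x => ∑' n, s n * G n x) := by
    intro s
    rw [continuous_iff_continuousAt]
    intro x
    obtain ⟨n₀, N, hNo, hxN, hvan⟩ := window x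
    have hev : (fun y => ∑' n, s n * G n y) =ᶠ[𝓝 x] (fun y => s n₀ * G n₀ y) :=
      eventually_of_mem (hNo.mem_nhds hxN)
        (fun y hy => hts s y n₀ (fun m hm => hvan m hm y hy))
    exact ((continuous_const.mul (map_continuous (G n₀))).continuousAt).congr hev.symm
  set σ : (ℕ →ᵇ ℝ) → C(X,ℝ) := fun s => ⟨fun x => ∑' n, s n * G n x, hΦc s⟩ with hσ_def
  have hσadd : ∀ (a b : ℝ) (s t : ℕ →ᵇ ℝ), σ (a • s + b • t) = a • σ s + b • σ t := by
    intro a b s t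
    ext x
    obtain ⟨n₀, hv⟩ := hwin' x
    show (∑' n, (a • s + b • t) n * G n x) = a * (∑' n, s n * G n x) + b * (∑' n, t n * G n x)
    rw [hts _ x n₀ hv, hts s x n₀ hv, hts t x n₀ hv]
    simp only [BoundedContinuousFunction.coe_add, BoundedContinuousFunction.coe_smul,
      Pi.add_apply, Pi.smul_apply, smul_eq_mul]
    ring
  have hσsmul : ∀ (a : ℝ) (s : ℕ →ᵇ ℝ), σ (a • s) = a • σ s := by
    intro a s
    ext x
    obtain ⟨n₀, hv⟩ := hwin' x
    show (∑' n, (a • s) n * G n x) = a * (∑' n, s n * G n x)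
    rw [hts _ x n₀ hv, hts s x n₀ hv]
    simp only [BoundedContinuousFunction.coe_smul, Pi.smul_apply, smul_eq_mul]
    ring
  have hσsub : ∀ (s t : ℕ →ᵇ ℝ), σ s - σ t = σ (s - t) := by
    intro s t
    have := hσadd 1 (-1) s t
    simp only [one_smul, neg_smul] at this
    rw [sub_eq_add_neg, sub_eq_add_neg, ← neg_one_smul ℝ t, ← neg_one_smul ℝ (σ t)]
    rw [this, neg_one_smul]
  set Bt : Set (ℕ →ᵇ ℝ) := σ ⁻¹' B with hBt_def
  have hBtconv : Convex ℝ Bt := by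
    intro s hs t ht a b ha hb hab
    show σ _ ∈ B
    rw [hσadd]
    exact hconv hs ht ha hb hab
  have hBtbal : Balanced ℝ Bt := by
    intro a ha x hx
    obtain ⟨y, hy, rfl⟩ := hx
    show σ (a • y) ∈ B
    rw [hσsmul]
    exact hbal (a := a) ha ⟨σ y, hy, rfl⟩
  have hBtabs : Absorbent ℝ Bt := by
    intro s
    filter_upwards [(habs (σ s)).eventually, ev_norm_ge] with a ha ha1
    have ha0 : a ≠ 0 := by intro h; rw [h] at ha1; simp at ha1; linarith
    rw [Set.singleton_subset_iff] at ha ⊢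
    rw [Set.mem_smul_set_iff_inv_smul_mem₀ ha0] at ha ⊢
    show σ _ ∈ B
    rw [hσsmul]
    exact ha
  have hbound : ∀ K : Set X, IsCompact K → ∃ C : ℝ, 0 < C ∧
      ∀ (t : ℕ →ᵇ ℝ) x, x ∈ K → |σ t x| ≤ ‖t‖ * C := by
    intro K hK
    obtain ⟨Mk, hMk⟩ : ∃ M, ∀ x ∈ K, |f x| ≤ M := by
      obtain ⟨M, hM⟩ := (hK.bddAbove_image ((map_continuous f).abs.continuousOn))
      exact ⟨M, fun x hx => hM (Set.mem_image_of_mem _ hx)⟩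
    obtain ⟨N₀, hN₀⟩ := exists_nat_ge ((Mk + 1)/5)
    have hsmall : ∀ n x, x ∈ K → x ∈ U n → n < N₀ := by
      intro n x hxK hxU
      simp only [hU_def, mem_preimage, mem_Ioo] at hxU
      have h1 : c n < Mk + 1 := by linarith [hMk x hxK]
      have h2 := hlow n
      have h3 : (Mk + 1) ≤ 5 * (N₀:ℝ) := by linarith [(div_le_iff₀ (by norm_num : (0:ℝ) < 5)).1 hN₀]
      have : 5 * (n:ℝ) < 5 * (N₀:ℝ) := by linarith
      exact_mod_cast Nat.cast_lt.1 (by linarith : (n:ℝ) < N₀)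
    have hGb : ∀ n, ∃ Mn, ∀ x ∈ K, |G n x| ≤ Mn := by
      intro n
      obtain ⟨M, hM⟩ := (hK.bddAbove_image ((map_continuous (G n)).abs.continuousOn))
      exact ⟨M, fun x hx => hM (Set.mem_image_of_mem _ hx)⟩
    choose M' hM' using hGb
    refine ⟨(∑ i ∈ Finset.range N₀, |M' i|) + 1, by positivity, fun t x hxK => ?_⟩
    obtain ⟨n₀, hv⟩ := hwin' x
    have heval : σ t x = t n₀ * G n₀ x := hts t x n₀ hv
    by_cases hz : G n₀ x = 0
    · rw [heval, hz, mul_zero, abs_zero]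
      positivity
    · have hxU : x ∈ U n₀ := by
        by_contra hxU
        exact hz (hGv n₀ x hxU)
      have hn₀ : n₀ < N₀ := hsmall n₀ x hxK hxU
      rw [heval, abs_mul]
      have h1 : |t n₀| ≤ ‖t‖ := by
        simpa using BoundedContinuousFunction.norm_coe_le_norm t n₀
      have h2 : |G n₀ x| ≤ (∑ i ∈ Finset.range N₀, |M' i|) + 1 := by
        have h3 : |G n₀ x| ≤ M' n₀ := hM' n₀ x hxK
        have h4 : M' n₀ ≤ |M' n₀| := le_abs_self _
        have h5 : |M' n₀| ≤ ∑ i ∈ Finset.range N₀, |M' i| :=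
          Finset.single_le_sum (f := fun i => |M' i|) (fun i _ => abs_nonneg _)
            (Finset.mem_range.2 hn₀)
        linarith
      exact mul_le_mul h1 h2 (abs_nonneg _) (norm_nonneg _)
  have hBtcl : IsClosed Bt := by
    refine IsSeqClosed.isClosed ?_
    intro w s hw hconv'
    show σ s ∈ B
    rw [← hcl.closure_eq, mem_closure_iff_nhds_basis (co_nhds_basis (σ s))]
    rintro ⟨K, V⟩ ⟨hK, hV⟩
    obtain ⟨ε, hε, hεV⟩ := Metric.mem_uniformity_dist.1 hV
    obtain ⟨C, hC, hCb⟩ := hbound K hK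
    obtain ⟨k, hk⟩ := (Metric.tendsto_atTop.1 hconv' (ε / C) (by positivity))
    refine ⟨σ (w k), hw k, fun x hx => ?_⟩
    apply hεV
    have h1 : σ s x - σ (w k) x = σ (s - w k) x := by
      rw [← hσsub]
      simp
    rw [Real.dist_eq, h1]
    have h2 := hCb (s - w k) x hx
    have h3 : ‖s - w k‖ < ε / C := by
      rw [norm_sub_rev, ← dist_eq_norm]
      exact hk k le_rfl
    calc |σ (s - w k) x| ≤ ‖s - w k‖ * C := h2
    _ < (ε / C) * C := by exact mul_lt_mul_of_pos_right h3 hC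
    _ = ε := by field_simp
  have hnhds := baire_barrel_mem_nhds hBtcl hBtbal hBtconv hBtabs
  obtain ⟨ρ, hρ, hball⟩ := Metric.mem_nhds_iff.1 hnhds
  obtain ⟨n, hn⟩ := pow_unbounded_of_one_lt (2/ρ) (by norm_num : (1:ℝ) < 2)
  have habs2 : |ρ/2| = ρ/2 := abs_of_nonneg (by linarith)
  obtain ⟨e, henorm, hen, he0⟩ : ∃ e : ℕ →ᵇ ℝ, ‖e‖ ≤ ρ/2 ∧ e n = ρ/2 ∧ ∀ m ≠ n, e m = 0 := by
    refine ⟨⟨⟨fun m => if m = n then ρ/2 else 0, continuous_of_discreteTopology⟩, ρ, fun a b => ?_⟩,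
      ?_, by show (if n = n then ρ/2 else 0) = ρ/2; simp,
      fun m hm => by show (if m = n then ρ/2 else 0) = 0; simp [hm]⟩
    · dsimp [Real.dist_eq]
      split <;> split <;> simp [habs2] <;> linarith
    · rw [BoundedContinuousFunction.norm_le (by linarith)]
      intro m
      show |if m = n then ρ/2 else 0| ≤ ρ/2
      split <;> simp [habs2]
      linarith
  have heB : σ e ∈ B := by
    apply hball
    rw [Metric.mem_ball, dist_zero_right]
    linarith
  have heq : σ e = ((ρ/2) * 2^n) • g0 n := by
    ext x
    show (∑' m, e m * G m x) = ((ρ/2) * 2^n) * g0 n x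
    rw [tsum_eq_single n (fun m hm => by rw [he0 m hm, zero_mul])]
    rw [hen]
    show (ρ/2) * ((2^n : ℝ) * g0 n x) = _
    ring
  set d : ℝ := (ρ/2) * 2^n with hd_def
  have hd1 : 1 ≤ d := by
    rw [hd_def]
    rw [div_lt_iff₀ hρ] at hn
    nlinarith
  have hd0 : d ≠ 0 := by linarith
  have : g0 n ∈ B := by
    have hmem : g0 n ∈ d⁻¹ • B := by
      refine ⟨σ e, heB, ?_⟩
      rw [heq]
      show d⁻¹ • (d • g0 n) = g0 n
      rw [smul_smul, inv_mul_cancel₀ hd0, one_smul]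
    exact hbal (a := d⁻¹) (by
      rw [Real.norm_eq_abs, abs_of_nonneg (by positivity)]
      exact inv_le_one_of_one_le₀ hd1) hmem
  exact hg0B n this


set_option maxHeartbeats 1000000 in
lemma barrel_contains_unif_ball {B : Set C(X,ℝ)}
    (hcl : IsClosed B) (hbal : Balanced ℝ B) (hconv : Convex ℝ B) (habs : Absorbent ℝ B) :
    ∃ r : ℝ, 0 < r ∧ ∀ f : C(X,ℝ), (∀ x, |f x| ≤ r) → f ∈ B := by
  set j : (X →ᵇ ℝ) → C(X,ℝ) := fun f => f.toContinuousMap with hj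
  have hjadd : ∀ (a b : ℝ) (f g : X →ᵇ ℝ), j (a • f + b • g) = a • j f + b • j g := by
    intro a b f g; ext x; simp [hj]
  have hjsmul : ∀ (a : ℝ) (f : X →ᵇ ℝ), j (a • f) = a • j f := by
    intro a f; ext x; simp [hj]
  set B3 : Set (X →ᵇ ℝ) := j ⁻¹' B with hB3
  have hB3conv : Convex ℝ B3 := by
    intro f hf g hg a b ha hb hab
    show j _ ∈ B
    rw [hjadd]
    exact hconv hf hg ha hb hab
  have hB3bal : Balanced ℝ B3 := by
    intro c hc x hx
    obtain ⟨y, hy, rfl⟩ := hx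
    show j (c • y) ∈ B
    rw [hjsmul]
    exact hbal (a := c) hc ⟨j y, hy, rfl⟩
  have hB3abs : Absorbent ℝ B3 := by
    intro f
    filter_upwards [(habs (j f)).eventually, ev_norm_ge] with c hc hc1
    have hc0 : c ≠ 0 := by intro h; rw [h] at hc1; simp at hc1; linarith
    rw [Set.singleton_subset_iff] at hc ⊢
    rw [Set.mem_smul_set_iff_inv_smul_mem₀ hc0] at hc ⊢
    show j _ ∈ B
    rw [hjsmul]
    exact hc
  have hB3cl : IsClosed B3 := by
    refine IsSeqClosed.isClosed ?_
    intro u f hu hf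
    show j f ∈ B
    rw [← hcl.closure_eq, mem_closure_iff_nhds_basis (co_nhds_basis (j f))]
    rintro ⟨K, V⟩ ⟨hK, hV⟩
    obtain ⟨ε, hε, hεV⟩ := Metric.mem_uniformity_dist.1 hV
    obtain ⟨k, hk⟩ := (Metric.tendsto_atTop.1 hf ε hε)
    refine ⟨j (u k), hu k, fun x _ => ?_⟩
    exact hεV (lt_of_le_of_lt (BoundedContinuousFunction.dist_coe_le_dist x)
      (by rw [dist_comm]; exact hk k le_rfl))
  have := baire_barrel_mem_nhds hB3cl hB3bal hB3conv hB3abs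
  obtain ⟨ρ, hρ, hball⟩ := Metric.mem_nhds_iff.1 this
  refine ⟨ρ/2, by linarith, fun f hf => ?_⟩
  have hbd : ∀ x y : X, dist (f x) (f y) ≤ ρ/2 + ρ/2 := fun x y => by
    have h1 := hf x; have h2 := hf y
    rw [Real.dist_eq]
    calc |f x - f y| ≤ |f x| + |f y| := abs_sub _ _
    _ ≤ ρ/2 + ρ/2 := by linarith
  have hin : (⟨f, ρ/2 + ρ/2, hbd⟩ : X →ᵇ ℝ) ∈ Metric.ball (0 : X →ᵇ ℝ) ρ := by
    rw [Metric.mem_ball, dist_zero_right]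
    have hn : ‖(⟨f, ρ/2 + ρ/2, hbd⟩ : X →ᵇ ℝ)‖ ≤ ρ/2 := by
      rw [BoundedContinuousFunction.norm_le (by linarith)]
      intro x
      exact hf x
    linarith
  exact hball hin


set_option maxHeartbeats 1600000 in
lemma barrel_contains_polar [T35Space X] {B : Set C(X,ℝ)}
    (hcl : IsClosed B) (hbal : Balanced ℝ B) (hconv : Convex ℝ B) (habs : Absorbent ℝ B) :
    ∃ (A : Set X) (ε : ℝ), 0 < ε ∧ (∀ f : C(X,ℝ), ∃ M, ∀ x ∈ A, |f x| ≤ M) ∧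
      {f : C(X,ℝ) | ∀ x ∈ A, |f x| ≤ ε} ⊆ B := by
  classical
  obtain ⟨r, hr, hball⟩ := barrel_contains_unif_ball hcl hbal hconv habs
  refine ⟨(goodSet B)ᶜ, r/4, by linarith, fun f => funct_bounded hcl hbal hconv habs f, ?_⟩
  have key : ∀ f : C(X,ℝ), (∀ x ∈ (goodSet B)ᶜ, |f x| ≤ r/2) → (2⁻¹ : ℝ) • f ∈ B := by
    intro f hf
    rw [← hcl.closure_eq, mem_closure_iff_nhds_basis (co_nhds_basis _)]
    rintro ⟨K, V⟩ ⟨hK, hV⟩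
    set W : Set X := {y | |f y| < r} with hW_def
    have hWopen : IsOpen W := by
      have : W = (fun y => |f y|) ⁻¹' Iio r := rfl
      rw [this]
      exact isOpen_Iio.preimage (map_continuous f).abs
    have total : ∀ x : X, ∃ O : Set X, IsOpen O ∧ (x ∈ K → x ∈ O) ∧
        ((∀ g : C(X,ℝ), (∀ y ∉ O, g y = 0) → g ∈ B) ∨ O = W) := by
      intro x
      by_cases hx : x ∈ goodSet B
      · obtain ⟨U, hUo, hUx, hUp⟩ := hx
        exact ⟨U, hUo, fun _ => hUx, Or.inl hUp⟩
      · refine ⟨W, hWopen, fun _ => ?_, Or.inr rfl⟩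
        have := hf x hx
        show |f x| < r
        linarith
    choose O hOo hOx hOspec using total
    have hbump : ∀ x : X, ∃ p : C(X,ℝ), (∀ y, p y ∈ Icc (0:ℝ) 1) ∧ (x ∈ K → p x = 1) ∧
        ∀ y ∉ O x, p y = 0 := by
      intro x
      by_cases hxK : x ∈ K
      · obtain ⟨q, hqc, hq0, hq1⟩ := CompletelyRegularSpace.completely_regular x (O x)ᶜ
          (hOo x).isClosed_compl (by simpa using hOx x hxK)
        refine ⟨⟨fun y => 1 - (q y : ℝ), by continuity⟩, fun y => ?_, fun _ => ?_, fun y hy => ?_⟩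
        · constructor
          · simp only [ContinuousMap.coe_mk]
            nlinarith [(q y).2.1, (q y).2.2]
          · simp only [ContinuousMap.coe_mk]
            nlinarith [(q y).2.1, (q y).2.2]
        · simp [hq0]
        · have : q y = 1 := hq1 (by simpa using hy)
          simp [this]
      · exact ⟨0, fun y => by simp, fun h => absurd h hxK, fun y hy => rfl⟩
    choose p hp01 hpK hp0 using hbump
    have hNopen : ∀ x : X, IsOpen {y | 1/2 < p x y} := by
      intro x
      have : {y | 1/2 < p x y} = (p x) ⁻¹' Ioi (1/2) := rfl
      rw [this]
      exact isOpen_Ioi.preimage (map_continuous (p x))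
    obtain ⟨T, hTK, hTcov⟩ := hK.elim_nhds_subcover (fun x => {y | 1/2 < p x y})
      (fun x hx => (hNopen x).mem_nhds (by simp only [mem_setOf_eq, hpK x hx]; norm_num))
    set S : C(X,ℝ) := ∑ x ∈ T, p x with hS_def
    have hSval : ∀ y, S y = ∑ x ∈ T, p x y := by intro y; simp [hS_def]
    have hSnonneg : ∀ y, 0 ≤ S y := by
      intro y
      rw [hSval]
      exact Finset.sum_nonneg (fun x _ => (hp01 x y).1)
    have hSK : ∀ y ∈ K, 1/2 < S y := by
      intro y hy
      obtain ⟨x, hxT, hxN⟩ := by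
        have := hTcov hy
        simpa only [mem_iUnion, exists_prop] using this
      rw [hSval]
      calc (1:ℝ)/2 < p x y := hxN
      _ ≤ ∑ x ∈ T, p x y :=
          Finset.single_le_sum (f := fun x => p x y) (fun i _ => (hp01 i y).1) hxT
    set D : C(X,ℝ) := ⟨fun y => max (S y) (1/2), by continuity⟩ with hD_def
    have hDhalf : ∀ y, (1:ℝ)/2 ≤ D y := fun y => le_max_right _ _
    have hDpos : ∀ y, (0:ℝ) < D y := fun y => lt_of_lt_of_le (by norm_num) (hDhalf y)
    have hD0 : ∀ y, D y ≠ 0 := fun y => (hDpos y).ne'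
    have hSD : ∀ y, S y ≤ D y := fun y => le_max_left _ _
    set φ : X → C(X,ℝ) := fun x => ⟨fun y => p x y / D y,
      ((map_continuous (p x)).div (map_continuous D) hD0)⟩ with hφ_def
    have hφval : ∀ x y, φ x y = p x y / D y := fun x y => rfl
    have hφ0 : ∀ x y, 0 ≤ φ x y := fun x y => div_nonneg (hp01 x y).1 (hDpos y).le
    have hφvan : ∀ x y, y ∉ O x → φ x y = 0 := by
      intro x y hy
      rw [hφval, hp0 x y hy, zero_div]
    have hφsum : ∀ y, (∑ x ∈ T, φ x y) = S y / D y := by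
      intro y
      rw [hSval, Finset.sum_div]
      exact Finset.sum_congr rfl (fun x _ => rfl)
    have hφsum_le : ∀ y, (∑ x ∈ T, φ x y) ≤ 1 := by
      intro y
      rw [hφsum]
      exact div_le_one_of_le₀ (hSD y) (hDpos y).le
    have hφsumK : ∀ y ∈ K, (∑ x ∈ T, φ x y) = 1 := by
      intro y hy
      rw [hφsum]
      have hDy : D y = S y := max_eq_left (le_of_lt (hSK y hy))
      rw [hDy, div_self (by linarith [hSK y hy] : S y ≠ 0)]
    set T1 : Finset X := T.filter (fun x => O x = W) with hT1_def
    set T2 : Finset X := T.filter (fun x => ¬ (O x = W)) with hT2_def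
    -- the W-part of the sum
    set bW : C(X,ℝ) := f * ∑ x ∈ T1, φ x with hbW_def
    have hbWval : ∀ y, bW y = f y * ∑ x ∈ T1, φ x y := by
      intro y
      show f y * (∑ x ∈ T1, φ x) y = _
      simp
    have hbWB : bW ∈ B := by
      apply hball
      intro y
      rw [hbWval]
      by_cases hyW : y ∈ W
      · have h1 : |f y| < r := hyW
        have h2 : 0 ≤ ∑ x ∈ T1, φ x y := Finset.sum_nonneg (fun x _ => hφ0 x y)
        have h3 : (∑ x ∈ T1, φ x y) ≤ 1 := by
          refine le_trans ?_ (hφsum_le y)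
          exact Finset.sum_le_sum_of_subset_of_nonneg (Finset.filter_subset _ _)
            (fun x hx _ => hφ0 x y)
        rw [abs_mul]
        calc |f y| * |∑ x ∈ T1, φ x y| ≤ |f y| * 1 := by
              refine mul_le_mul_of_nonneg_left ?_ (abs_nonneg _)
              rw [abs_of_nonneg h2]; exact h3
        _ ≤ r := by rw [mul_one]; exact h1.le
      · have : ∀ x ∈ T1, φ x y = 0 := by
          intro x hx
          have hOW : O x = W := (Finset.mem_filter.1 hx).2
          exact hφvan x y (by rw [hOW]; exact hyW)
        rw [Finset.sum_eq_zero this, mul_zero, abs_zero]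
        linarith
    -- the good part of the sum
    set bV : C(X,ℝ) := ∑ x ∈ T2, f * φ x with hbV_def
    have hbVB : bV ∈ B := by
      rcases Finset.eq_empty_or_nonempty T2 with hT2e | hT2ne
      · rw [hbV_def, hT2e, Finset.sum_empty]
        exact habs.zero_mem
      · set k : ℕ := T2.card with hk_def
        have hk0 : 0 < k := Finset.card_pos.2 hT2ne
        have hkR : (0:ℝ) < k := by exact_mod_cast hk0
        have hmem : ∀ x ∈ T2, (k:ℝ) • (f * φ x) ∈ B := by
          intro x hx
          have hnW : ¬ (O x = W) := (Finset.mem_filter.1 hx).2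
          have hOgood : ∀ g : C(X,ℝ), (∀ y ∉ O x, g y = 0) → g ∈ B :=
            (hOspec x).resolve_right hnW
          apply hOgood
          intro y hy
          show (k:ℝ) * (f y * φ x y) = 0
          rw [hφvan x y hy, mul_zero, mul_zero]
        have : bV = ∑ x ∈ T2, (k:ℝ)⁻¹ • ((k:ℝ) • (f * φ x)) := by
          rw [hbV_def]
          refine Finset.sum_congr rfl (fun x _ => ?_)
          rw [smul_smul, inv_mul_cancel₀ hkR.ne', one_smul]
        rw [this]
        refine hconv.sum_mem (fun x _ => by positivity) ?_ (fun x hx => hmem x hx)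
        rw [Finset.sum_const, hk_def, nsmul_eq_mul, mul_inv_cancel₀ hkR.ne']
    have hbVval : ∀ y, bV y = f y * ∑ x ∈ T2, φ x y := by
      intro y
      rw [hbV_def]
      rw [show ((∑ x ∈ T2, f * φ x) y) = ∑ x ∈ T2, (f y * φ x y) by simp]
      rw [Finset.mul_sum]
    -- the convex combination
    refine ⟨(2⁻¹ : ℝ) • bW + (2⁻¹ : ℝ) • bV,
      hconv hbWB hbVB (by norm_num) (by norm_num) (by norm_num), fun x hx => ?_⟩
    have hsplit : (∑ z ∈ T1, φ z x) + (∑ z ∈ T2, φ z x) = 1 := by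
      rw [hT1_def, hT2_def, Finset.sum_filter_add_sum_filter_not]
      exact hφsumK x hx
    have hveq : ((2⁻¹ : ℝ) • bW + (2⁻¹ : ℝ) • bV) x = ((2⁻¹ : ℝ) • f) x := by
      show (2⁻¹ : ℝ) * bW x + (2⁻¹ : ℝ) * bV x = (2⁻¹ : ℝ) * f x
      rw [hbWval, hbVval]
      linear_combination (2⁻¹ * f x) * hsplit
    rw [show ((((2⁻¹:ℝ) • f) x, ((2⁻¹:ℝ) • bW + (2⁻¹:ℝ) • bV) x)) =
      ((((2⁻¹:ℝ) • f) x, (((2⁻¹:ℝ) • f) x)) : ℝ × ℝ) by rw [hveq]]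
    exact refl_mem_uniformity hV
  intro f hf
  have h2f : ∀ x ∈ (goodSet B)ᶜ, |((2:ℝ) • f) x| ≤ r/2 := by
    intro x hx
    have := hf x hx
    show |2 * f x| ≤ r/2
    rw [abs_mul]
    rw [abs_two]
    linarith
  have := key ((2:ℝ) • f) h2f
  rwa [smul_smul, show (2⁻¹ : ℝ) * 2 = 1 by norm_num, one_smul] at this


end GPHelpers

/-- Let `τ` and `𝒯` be locally convex topologies on `C(X)` with
`𝒯_p ⊆ τ ⊆ 𝒯 ⊆ 𝒯_k` (pointwise to compact-open; note that in the order on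
`TopologicalSpace`, smaller means finer).  If `(C(X), τ)` is Gelfand–Phillips, then so is
`(C(X), 𝒯)`. -/
theorem stmt15 {X : Type*} [TopologicalSpace X] [T35Space X]
    (τ 𝒯 : TopologicalSpace C(X, ℝ))
    (h1 : τ ≤ TpTop X) (h2 : 𝒯 ≤ τ) (h3 : ContinuousMap.compactOpen ≤ 𝒯)
    (hτ1 : @IsTopologicalAddGroup C(X, ℝ) τ _) (hτ2 : @ContinuousSMul ℝ C(X, ℝ) _ _ τ)
    (hτ3 : @LocallyConvexSpace ℝ C(X, ℝ) _ _ _ _ τ)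
    (h𝒯1 : @IsTopologicalAddGroup C(X, ℝ) 𝒯 _) (h𝒯2 : @ContinuousSMul ℝ C(X, ℝ) _ _ 𝒯)
    (h𝒯3 : @LocallyConvexSpace ℝ C(X, ℝ) _ _ _ _ 𝒯)
    (hGP : GelfandPhillipsT τ) :
    GelfandPhillipsT 𝒯 := by
  intro A hbb hlim B hB
  obtain ⟨hBcl, hBbal, hBconv, hBabs⟩ := hB
  have hBclco : IsClosed[ContinuousMap.compactOpen] B := hBcl.mono h3
  obtain ⟨A₀, ε, hε, hFB, hsub⟩ := barrel_contains_polar hBclco hBbal hBconv hBabs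
  set B' : Set C(X,ℝ) := {f | ∀ x ∈ A₀, |f x| ≤ ε} with hB'_def
  have hpi : IsClosed {g : X → ℝ | ∀ x ∈ A₀, |g x| ≤ ε} := by
    have : {g : X → ℝ | ∀ x ∈ A₀, |g x| ≤ ε} = ⋂ x ∈ A₀, {g : X → ℝ | |g x| ≤ ε} := by
      ext g; simp
    rw [this]
    exact isClosed_biInter (fun x _ => isClosed_le ((continuous_apply x).abs) continuous_const)
  have hB'cl : IsClosed[TpTop X] B' := by
    unfold TpTop
    rw [isClosed_induced_iff]
    exact ⟨_, hpi, rfl⟩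
  have hB'bal : Balanced ℝ B' := by
    intro c hc g hg
    obtain ⟨f0, hf0, rfl⟩ := hg
    intro x hx
    show |c * f0 x| ≤ ε
    rw [abs_mul]
    have h1 := hf0 x hx
    have hc' : |c| ≤ 1 := by rwa [Real.norm_eq_abs] at hc
    nlinarith [abs_nonneg c, abs_nonneg (f0 x)]
  have hB'conv : Convex ℝ B' := by
    intro g1 hg1 g2 hg2 a b ha hb hab x hx
    show |a * g1 x + b * g2 x| ≤ ε
    calc |a * g1 x + b * g2 x| ≤ |a * g1 x| + |b * g2 x| := abs_add_le _ _
    _ ≤ a * ε + b * ε := by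
        rw [abs_mul, abs_mul, abs_of_nonneg ha, abs_of_nonneg hb]
        have := hg1 x hx
        have := hg2 x hx
        have := abs_nonneg (g1 x)
        have := abs_nonneg (g2 x)
        nlinarith
    _ = ε := by rw [← add_mul, hab, one_mul]
  have hB'abs : Absorbent ℝ B' := by
    intro g
    obtain ⟨M, hM⟩ := hFB g
    refine Absorbs.of_norm ⟨(|M| + ε)/ε, fun c hc => ?_⟩
    have hc1 : (1:ℝ) ≤ ‖c‖ := le_trans (by
      rw [le_div_iff₀ hε]
      have := abs_nonneg M
      linarith) hc
    have hc0 : c ≠ 0 := by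
      intro h; rw [h, norm_zero] at hc1; linarith
    rw [Set.singleton_subset_iff, Set.mem_smul_set_iff_inv_smul_mem₀ hc0]
    intro x hx
    show |c⁻¹ * g x| ≤ ε
    rw [abs_mul, abs_inv]
    have hgx : |g x| ≤ |M| := le_trans (hM x hx) (le_abs_self M)
    have hcpos : (0:ℝ) < |c| := by
      rw [← Real.norm_eq_abs]; linarith
    have hcge : (|M| + ε)/ε ≤ |c| := by rwa [← Real.norm_eq_abs]
    have h2 : |M| + ε ≤ ε * |c| := by
      rw [div_le_iff₀ hε] at hcge
      linarith [hcge]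
    have h3 : |g x| ≤ ε * |c| := by linarith
    calc |c|⁻¹ * |g x| ≤ |c|⁻¹ * (ε * |c|) := by
          exact mul_le_mul_of_nonneg_left h3 (by positivity)
    _ = ε := by field_simp
  have hB'τ : IsBarrelT τ B' := ⟨hB'cl.mono h1, hB'bal, hB'conv, hB'abs⟩
  have hbbτ : BarrelBoundedT τ A := fun Bb hBb =>
    hbb Bb ⟨hBb.1.mono h2, hBb.2.1, hBb.2.2.1, hBb.2.2.2⟩
  have hlimτ : LimitedT τ A := fun χ hχ ε' hε' =>
    hlim χ ⟨fun n => continuous_le_dom h2 (hχ.1 n), hχ.2⟩ ε' hε'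
  obtain ⟨F, hFfin, hFsub⟩ := hGP A hbbτ hlimτ B' hB'τ
  exact ⟨F, hFfin, hFsub.trans (Set.add_subset_add_left hsub)⟩
end

section
/- A Banach space E has the Gelfand–Phillips property if and only if every limited operator T : L → E from a normed space L into E is a compact operator (maps the unit ball to a relatively compact set). -/
open Filter Topology

/-- A Banach space is *Gelfand–Phillips* if every limited subset is relatively norm compact. -/
def GelfandPhillipsBanach (E : Type*) [NormedAddCommGroup E] [NormedSpace ℝ E] : Prop :=
  ∀ A : Set E, LimitedSetB A → IsCompact (closure A)

/-- A limited set is bounded. -/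
lemma LimitedSetB.bounded {E : Type*} [NormedAddCommGroup E] [NormedSpace ℝ E]
    {A : Set E} (hA : LimitedSetB A) : ∃ M : ℝ, 0 ≤ M ∧ ∀ a ∈ A, ‖a‖ ≤ M := by
  have hpt : ∀ f : E →L[ℝ] ℝ, ∃ C : ℝ,
      ∀ a : A, ‖(NormedSpace.inclusionInDoubleDual ℝ E) a f‖ ≤ C := by
    intro f
    have hχ : ∀ x : E, Tendsto (fun n : ℕ => ((((n : ℝ) + 1)⁻¹) • f) x) atTop (𝓝 0) := by
      intro x
      have h1 : Tendsto (fun n : ℕ => ((n : ℝ) + 1)⁻¹ * f x) atTop (𝓝 (0 * f x)) :=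
        (tendsto_one_div_add_atTop_nhds_zero_nat.congr (by simp [one_div])).mul_const _
      simpa using h1
    obtain ⟨n, hn⟩ := (hA (fun n => (((n : ℝ) + 1)⁻¹) • f) hχ 1 one_pos).exists
    refine ⟨(n : ℝ) + 1, fun a => ?_⟩
    have h2 := hn a a.2
    simp only [ContinuousLinearMap.smul_apply, smul_eq_mul, abs_mul] at h2
    have hpos : (0 : ℝ) < (n : ℝ) + 1 := by positivity
    rw [abs_inv, abs_of_pos hpos] at h2
    have h3 := (inv_mul_le_iff₀ hpos).mp h2
    simpa [NormedSpace.dual_def, mul_comm] using h3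
  obtain ⟨C', hC'⟩ := banach_steinhaus
    (g := fun a : A => (NormedSpace.inclusionInDoubleDual ℝ E) a)
    (fun f => by obtain ⟨C, hC⟩ := hpt f; exact ⟨C, fun a => hC a⟩)
  refine ⟨max C' 0, le_max_right _ _, fun a ha => ?_⟩
  refine NormedSpace.norm_le_dual_bound ℝ a (le_max_right _ _) (fun f => ?_)
  calc ‖f a‖ = ‖(NormedSpace.inclusionInDoubleDual ℝ E) a f‖ := rfl
    _ ≤ ‖(NormedSpace.inclusionInDoubleDual ℝ E) a‖ * ‖f‖ :=
        ContinuousLinearMap.le_opNorm _ _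
    _ ≤ max C' 0 * ‖f‖ :=
        mul_le_mul_of_nonneg_right ((hC' ⟨a, ha⟩).trans (le_max_left _ _)) (norm_nonneg _)

/-- A Banach space `E` is Gelfand–Phillips iff every limited operator `T : L → E` from a
normed space `L` (i.e. one mapping the closed unit ball of `L` to a limited set) is compact
(maps the closed unit ball to a relatively compact set). -/
theorem stmt18 {E : Type u} [NormedAddCommGroup E] [NormedSpace ℝ E] [CompleteSpace E] :
    GelfandPhillipsBanach E ↔
      ∀ (L : Type u) (_ : NormedAddCommGroup L), ∀ (_ : NormedSpace ℝ L),
        ∀ T : L →L[ℝ] E, LimitedSetB (T '' Metric.closedBall 0 1) →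
          IsCompact (closure (T '' Metric.closedBall 0 1)) := by
  classical
  constructor
  · intro h L _ _ T hT
    exact h _ hT
  · intro h A hA
    obtain ⟨M, hM0, hM⟩ := hA.bounded
    have h1 : (0:ℝ) < (1 : ENNReal).toReal := by norm_num
    have hsum : ∀ f : lp (fun _ : A => ℝ) 1, Summable (fun a : A => ‖f a‖) := by
      intro f
      simpa using (memℓp_gen_iff h1).mp (lp.memℓp f)
    have hsumN : ∀ f : lp (fun _ : A => ℝ) 1,
        Summable (fun a : A => ‖f a • (a : E)‖) := by
      intro f
      refine Summable.of_nonneg_of_le (fun a => norm_nonneg _) (fun a => ?_)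
        ((hsum f).mul_left M)
      rw [norm_smul]
      calc ‖f a‖ * ‖(a : E)‖ ≤ ‖f a‖ * M :=
            mul_le_mul_of_nonneg_left (hM a a.2) (norm_nonneg _)
        _ = M * ‖f a‖ := by ring
    have hsumE : ∀ f : lp (fun _ : A => ℝ) 1, Summable (fun a : A => f a • (a : E)) :=
      fun f => (hsumN f).of_norm
    have hnorm : ∀ f : lp (fun _ : A => ℝ) 1, ‖f‖ = ∑' a : A, ‖f a‖ := by
      intro f
      rw [lp.norm_eq_tsum_rpow h1 f]
      simp
    let Tlin : lp (fun _ : A => ℝ) 1 →ₗ[ℝ] E :=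
      { toFun := fun f => ∑' a : A, f a • (a : E)
        map_add' := by
          intro f g
          show (∑' a : A, (f + g) a • (a : E)) = _
          rw [← Summable.tsum_add (hsumE f) (hsumE g)]
          exact tsum_congr fun a => by
            rw [lp.coeFn_add]; simp [add_smul]
        map_smul' := by
          intro c f
          show (∑' a : A, (c • f) a • (a : E)) = c • ∑' a : A, f a • (a : E)
          rw [← Summable.tsum_const_smul c (hsumE f)]
          exact tsum_congr fun a => by
            rw [lp.coeFn_smul]; simp [smul_smul] }
    have hTb : ∀ f : lp (fun _ : A => ℝ) 1, ‖Tlin f‖ ≤ M * ‖f‖ := by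
      intro f
      calc ‖∑' a : A, f a • (a : E)‖ ≤ ∑' a : A, ‖f a • (a : E)‖ :=
            norm_tsum_le_tsum_norm (hsumN f)
        _ ≤ ∑' a : A, M * ‖f a‖ := by
            refine Summable.tsum_le_tsum (fun a => ?_) (hsumN f) ((hsum f).mul_left M)
            rw [norm_smul]
            calc ‖f a‖ * ‖(a : E)‖ ≤ ‖f a‖ * M :=
                  mul_le_mul_of_nonneg_left (hM a a.2) (norm_nonneg _)
              _ = M * ‖f a‖ := by ring
        _ = M * ∑' a : A, ‖f a‖ := by rw [tsum_mul_left]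
        _ = M * ‖f‖ := by rw [hnorm f]
    let T : lp (fun _ : A => ℝ) 1 →L[ℝ] E := Tlin.mkContinuous M hTb
    have hTapp : ∀ f : lp (fun _ : A => ℝ) 1, T f = ∑' a : A, f a • (a : E) :=
      fun f => rfl
    have hAsub : A ⊆ T '' Metric.closedBall 0 1 := by
      intro a ha
      refine ⟨lp.single 1 (⟨a, ha⟩ : A) (1 : ℝ), ?_, ?_⟩
      · rw [Metric.mem_closedBall, dist_zero_right]
        have := lp.norm_single (p := 1) (E := fun _ : A => ℝ) zero_lt_one
          (⟨a, ha⟩ : A) (1 : ℝ)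
        simpa using this.le
      · rw [hTapp, tsum_eq_single (⟨a, ha⟩ : A)]
        · rw [lp.single_apply_self]; simp
        · intro b hb
          rw [lp.single_apply_ne _ _ _ hb, zero_smul]
    have hlim : LimitedSetB (T '' Metric.closedBall 0 1) := by
      intro χ hχ ε hε
      filter_upwards [hA χ hχ ε hε] with n hn
      rintro x ⟨f, hf, rfl⟩
      rw [Metric.mem_closedBall, dist_zero_right] at hf
      rw [hTapp, (χ n).map_tsum (hsumE f)]
      have hsum1 : Summable (fun a : A => χ n (f a • (a : E))) :=
        (χ n).summable (hsumE f)
      have habs : Summable (fun a : A => |χ n (f a • (a : E))|) := hsum1.abs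
      calc |∑' a : A, χ n (f a • (a : E))| ≤ ∑' a : A, |χ n (f a • (a : E))| := by
            have h2 := norm_tsum_le_tsum_norm (f := fun a : A => χ n (f a • (a : E)))
              (by simpa only [Real.norm_eq_abs] using habs)
            simpa only [Real.norm_eq_abs] using h2
        _ ≤ ∑' a : A, ε * ‖f a‖ := by
            refine Summable.tsum_le_tsum (fun a => ?_) habs ((hsum f).mul_left ε)
            rw [map_smul, smul_eq_mul, abs_mul, mul_comm]
            exact mul_le_mul (hn a a.2) le_rfl (abs_nonneg _) hε.le
        _ = ε * ‖f‖ := by rw [tsum_mul_left, hnorm f]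
        _ ≤ ε := by nlinarith [norm_nonneg f]
    have hcomp := h (lp (fun _ : A => ℝ) 1) inferInstance inferInstance T hlim
    exact hcomp.of_isClosed_subset isClosed_closure (closure_mono hAsub)
end
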